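/- arXiv:1711.08890 — 2 statements merged into one kernel-verified Lean document; each statement's English description precedes it below -/
import Mathlib

section
/- For every connected graph S: if every connected S-free graph G satisfies κ'(G) = δ(G), then S is an induced subgraph of P₄. Conversely, if S is an induced subgraph of P₄, then every connected S-free graph on at least 2 vertices satisfies κ'(G) = δ(G). -/
open SimpleGraph

/-- The edge-connectivity of `G`: the minimum number of edges whose deletion disconnects `G`. -/
noncomputable def edgeConn {V : Type*} [Fintype V] (G : SimpleGraph V) : ℕ :=
  sInf {k | ∃ F : Finset (Sym2 V), ↑F ⊆ G.edgeSet ∧ F.card = k ∧ ¬ (G.deleteEdges ↑F).Connected}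

/-- The minimum degree of `G`. -/
noncomputable def minDeg {V : Type*} [Fintype V] (G : SimpleGraph V) : ℕ :=
  sInf {d | ∃ v : V, d = (G.neighborSet v).ncard}

namespace ForbiddenChar

open Finset
open scoped Classical

variable {V : Type*} {G : SimpleGraph V} {U A B X Y : Finset V} {a b c u v : V}

/-- Build an induced `P₄` from an explicit pattern. -/
lemma p4_embed {G : SimpleGraph V} {a b c d : V}
    (hab : G.Adj a b) (hbc : G.Adj b c) (hcd : G.Adj c d)
    (hac : ¬ G.Adj a c) (had : ¬ G.Adj a d) (hbd : ¬ G.Adj b d)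
    (hacne : a ≠ c) (hadne : a ≠ d) (hbdne : b ≠ d) :
    Nonempty (pathGraph 4 ↪g G) := by
  refine ⟨⟨⟨![a,b,c,d], ?_⟩, ?_⟩⟩
  · intro i j hij
    fin_cases i <;> fin_cases j <;> simp_all <;>
      first
        | rfl
        | exact absurd hij.symm (G.ne_of_adj hab)
        | exact absurd hij (G.ne_of_adj hab)
        | exact absurd hij.symm (G.ne_of_adj hbc)
        | exact absurd hij (G.ne_of_adj hbc)
        | exact absurd hij.symm (G.ne_of_adj hcd)
        | exact absurd hij (G.ne_of_adj hcd)
        | exact absurd hij hacne | exact absurd hij.symm hacne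
        | exact absurd hij hadne | exact absurd hij.symm hadne
        | exact absurd hij hbdne | exact absurd hij.symm hbdne
  · intro i j
    show G.Adj (![a,b,c,d] i) (![a,b,c,d] j) ↔ (pathGraph 4).Adj i j
    fin_cases i <;> fin_cases j <;>
      simp [pathGraph_adj, show ((3:Fin 4):ℕ) = 3 from rfl, hab, hbc, hcd, hac, had, hbd,
        hab.symm, hbc.symm, hcd.symm] <;>
      first
        | exact fun h => hac h.symm
        | exact fun h => had h.symm
        | exact fun h => hbd h.symm
        | exact G.irrefl

def RW (G : SimpleGraph V) (U : Finset V) (a b : V) : Prop :=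
  ∃ p : G.Walk a b, ∀ z ∈ p.support, z ∈ U

lemma RW.refl (ha : a ∈ U) : RW G U a a := ⟨Walk.nil, by simp [ha]⟩
lemma RW.symm (h : RW G U a b) : RW G U b a := by
  obtain ⟨p, hp⟩ := h; exact ⟨p.reverse, by simpa using hp⟩
lemma RW.trans (h : RW G U a b) (h' : RW G U b c) : RW G U a c := by
  obtain ⟨p, hp⟩ := h; obtain ⟨q, hq⟩ := h'
  refine ⟨p.append q, fun z hz => ?_⟩
  rw [Walk.mem_support_append_iff] at hz
  exact hz.elim (hp _) (hq _)
lemma RW.mem_left (h : RW G U a b) : a ∈ U := by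
  obtain ⟨p, hp⟩ := h; exact hp _ p.start_mem_support
lemma RW.mem_right (h : RW G U a b) : b ∈ U := by
  obtain ⟨p, hp⟩ := h; exact hp _ p.end_mem_support
lemma RW.adj_right (h : RW G U a b) (hadj : G.Adj b c) (hc : c ∈ U) : RW G U a c :=
  h.trans ⟨Walk.cons hadj Walk.nil, by simp [h.mem_right, hc]⟩
lemma RW.mono {U' : Finset V} (hU : U ⊆ U') (h : RW G U a b) : RW G U' a b := by
  obtain ⟨p, hp⟩ := h; exact ⟨p, fun z hz => hU (hp z hz)⟩

lemma exists_first_step : ∀ {a b : V} (p : G.Walk a b), a ≠ b →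
    ∃ c, G.Adj a c ∧ c ∈ p.support := by
  intro a b p
  cases p with
  | nil => exact fun h => absurd rfl h
  | cons h q => exact fun _ => ⟨_, h, by simp⟩

lemma exists_transition {P : V → Prop} : ∀ {a b : V} (p : G.Walk a b), ¬ P a → P b →
    ∃ x y, G.Adj x y ∧ ¬ P x ∧ P y ∧ x ∈ p.support ∧ y ∈ p.support := by
  intro a b p
  induction p with
  | nil => exact fun ha hb => absurd hb ha
  | @cons a c b h q ih =>
    intro ha hb
    by_cases h2 : P c
    · exact ⟨a, c, h, ha, h2, by simp, by simp⟩
    · obtain ⟨x, y, h3, h4, h5, h6, h7⟩ := ih h2 hb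
      exact ⟨x, y, h3, h4, h5, by simp [h6], by simp [h7]⟩

lemma walk_closed {P : V → Prop} {U : Finset V}
    (hcl : ∀ x y, P x → G.Adj x y → y ∈ U → P y) :
    ∀ {a b : V} (p : G.Walk a b), (∀ z ∈ p.support, z ∈ U) → P a → P b := by
  intro a b p
  induction p with
  | nil => exact fun _ h => h
  | cons h q ih =>
    intro hs hPa
    exact ih (fun z hz => hs z (by simp [hz])) (hcl _ _ hPa h (hs _ (by simp)))

lemma walk_closed_prop {V' : Type*} {G' : SimpleGraph V'} {P : V' → Prop}
    (hcl : ∀ x y, P x → G'.Adj x y → P y) :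
    ∀ {a b : V'} (p : G'.Walk a b), P a → P b := by
  intro a b p
  induction p with
  | nil => exact fun h => h
  | cons h q ih => exact fun hPa => ih (hcl _ _ hPa h)

/-- A `P₄`-free "connected finset" admits a join partition (Seinsche). -/
lemma seinsche_join (hP4 : ∀ {a b c d : V}, G.Adj a b → G.Adj b c → G.Adj c d →
      ¬ G.Adj a c → ¬ G.Adj a d → ¬ G.Adj b d → a ≠ c → a ≠ d → b ≠ d → False) :
    ∀ (n : ℕ) (U : Finset V), U.card = n → 2 ≤ U.card →
      (∀ a ∈ U, ∀ b ∈ U, RW G U a b) →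
    ∃ X Y : Finset V, X ∪ Y = U ∧ Disjoint X Y ∧ X.Nonempty ∧ Y.Nonempty ∧
      ∀ x ∈ X, ∀ y ∈ Y, G.Adj x y := by
  intro n
  induction n using Nat.strong_induction_on with
  | _ n ih =>
  intro U hcard h2 hconn
  obtain ⟨v, hv⟩ : U.Nonempty := card_pos.1 (by omega)
  set U' := U.erase v with hU'def
  have hvU' : v ∉ U' := notMem_erase _ _
  have hins : insert v U' = U := insert_erase hv
  have hU'sub : U' ⊆ U := erase_subset _ _
  have hU'card : U'.card = U.card - 1 := card_erase_of_mem hv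
  have hmemU' : ∀ x, x ∈ U' ↔ x ∈ U ∧ x ≠ v := by
    intro x; rw [hU'def, mem_erase]; tauto
  by_cases hsmall : U.card = 2
  · -- two-element case
    obtain ⟨w, hw⟩ : ∃ w, U' = {w} := card_eq_one.1 (by omega)
    have hwU : w ∈ U := hU'sub (hw ▸ mem_singleton_self w)
    have hwv : w ≠ v := ((hmemU' w).1 (hw ▸ mem_singleton_self w)).2
    obtain ⟨p, hp⟩ := hconn v hv w hwU
    obtain ⟨e, he, hes⟩ := exists_first_step p hwv.symm
    have heU : e ∈ U := hp e hes
    have hev : e ≠ v := (G.ne_of_adj he).symm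
    have hew : e = w := by
      have := (hmemU' e).2 ⟨heU, hev⟩
      rw [hw] at this; exact mem_singleton.1 this
    refine ⟨{v}, {w}, ?_, ?_, ⟨v, mem_singleton_self v⟩, ⟨w, mem_singleton_self w⟩, ?_⟩
    · rw [← hins, hw]; ext x; simp [or_comm]
    · simpa using hwv.symm
    · intro x hx y hy
      rw [mem_singleton] at hx hy; subst hx; subst hy; exact hew ▸ he
  · -- |U| ≥ 3
    have h3 : 3 ≤ U.card := by omega
    by_cases hc : ∀ a ∈ U', ∀ b ∈ U', RW G U' a b
    · -- U' is connected; use IH on U'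
      obtain ⟨X, Y, hXY, hdisj, hXne, hYne, hjoin⟩ :=
        ih (n-1) (by omega) U' (by omega) (by omega) hc
      have hXU' : X ⊆ U' := hXY ▸ subset_union_left
      have hYU' : Y ⊆ U' := hXY ▸ subset_union_right
      set N := U'.filter (G.Adj v) with hNdef
      have hNU' : N ⊆ U' := filter_subset _ _
      have hmemN : ∀ x, x ∈ N ↔ x ∈ U' ∧ G.Adj v x := by intro x; simp [hNdef]
      set Mx := X \ N with hMxdef
      set My := Y \ N with hMydef
      by_cases hMx : Mx.Nonempty
      · by_cases hMy : My.Nonempty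
        · -- both nonempty; v's neighborhood N is a join side
          have hNne : N.Nonempty := by
            obtain ⟨u, hu⟩ := hXne
            have huU : u ∈ U := hU'sub (hXU' hu)
            have huv : u ≠ v := ((hmemU' u).1 (hXU' hu)).2
            obtain ⟨p, hp⟩ := hconn v hv u huU
            obtain ⟨e, he, hes⟩ := exists_first_step p huv.symm
            refine ⟨e, (hmemN e).2 ⟨(hmemU' e).2 ⟨hp e hes, (G.ne_of_adj he).symm⟩, he⟩⟩
          obtain ⟨x0, hx0⟩ := hMx
          obtain ⟨y0, hy0⟩ := hMy
          have hx0X : x0 ∈ X := (mem_sdiff.1 hx0).1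
          have hy0Y : y0 ∈ Y := (mem_sdiff.1 hy0).1
          have hvx0 : ¬ G.Adj v x0 := fun h =>
            (mem_sdiff.1 hx0).2 ((hmemN x0).2 ⟨hXU' hx0X, h⟩)
          have hvy0 : ¬ G.Adj v y0 := fun h =>
            (mem_sdiff.1 hy0).2 ((hmemN y0).2 ⟨hYU' hy0Y, h⟩)
          have claimX : ∀ z ∈ N, z ∈ X → ∀ x1 ∈ Mx, G.Adj z x1 := by
            intro z hz hzX x1 hx1
            by_contra hzx1
            have hx1X : x1 ∈ X := (mem_sdiff.1 hx1).1
            have hvx1 : ¬ G.Adj v x1 := fun h =>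
              (mem_sdiff.1 hx1).2 ((hmemN x1).2 ⟨hXU' hx1X, h⟩)
            -- P4 : v - z - y0 - x1
            exact hP4 ((hmemN z).1 hz).2 (hjoin z hzX y0 hy0Y)
              (hjoin x1 hx1X y0 hy0Y).symm hvy0 hvx1 hzx1
              (fun h => hvU' (h ▸ hYU' hy0Y)) (fun h => hvU' (h ▸ hXU' hx1X))
              (fun h => (mem_sdiff.1 hx1).2 (h ▸ hz))
          have claimY : ∀ z ∈ N, z ∈ Y → ∀ y1 ∈ My, G.Adj z y1 := by
            intro z hz hzY y1 hy1
            by_contra hzy1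
            have hy1Y : y1 ∈ Y := (mem_sdiff.1 hy1).1
            have hvy1 : ¬ G.Adj v y1 := fun h =>
              (mem_sdiff.1 hy1).2 ((hmemN y1).2 ⟨hYU' hy1Y, h⟩)
            -- P4 : v - z - x0 - y1
            exact hP4 ((hmemN z).1 hz).2 (hjoin x0 hx0X z hzY).symm
              (hjoin x0 hx0X y1 hy1Y) hvx0 hvy1 hzy1
              (fun h => hvU' (h ▸ hXU' hx0X)) (fun h => hvU' (h ▸ hYU' hy1Y))
              (fun h => (mem_sdiff.1 hy1).2 (h ▸ hz))
          refine ⟨N, insert v (Mx ∪ My), ?_, ?_, hNne, ⟨v, mem_insert_self _ _⟩, ?_⟩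
          · -- union is U
            rw [← hins]
            ext x
            simp only [mem_union, mem_insert, hmemN, hMxdef, hMydef, mem_sdiff]
            constructor
            · rintro (⟨h1, _⟩ | (rfl | ⟨h1, _⟩ | ⟨h1, _⟩))
              · exact Or.inr h1
              · exact Or.inl rfl
              · exact Or.inr (hXU' h1)
              · exact Or.inr (hYU' h1)
            · rintro (rfl | h1)
              · exact Or.inr (Or.inl rfl)
              · by_cases h2 : x ∈ N
                · exact Or.inl ((hmemN x).1 h2)
                · have : x ∈ X ∪ Y := hXY ▸ h1
                  rcases mem_union.1 this with h3 | h3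
                  · exact Or.inr (Or.inr (Or.inl ⟨h3, fun hc => h2 ((hmemN x).2 hc)⟩))
                  · exact Or.inr (Or.inr (Or.inr ⟨h3, fun hc => h2 ((hmemN x).2 hc)⟩))
          · -- disjointness
            rw [Finset.disjoint_left]
            intro x hx hx2
            rcases mem_insert.1 hx2 with rfl | hx3
            · exact hvU' (hNU' hx)
            · rcases mem_union.1 hx3 with h4 | h4
              · exact (mem_sdiff.1 h4).2 hx
              · exact (mem_sdiff.1 h4).2 hx
          · -- join property
            intro z hz y hy
            rcases mem_insert.1 hy with rfl | hy2
            · exact ((hmemN z).1 hz).2.symm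
            · have hzXY : z ∈ X ∪ Y := hXY ▸ hNU' hz
              rcases mem_union.1 hy2 with h4 | h4
              · rcases mem_union.1 hzXY with h5 | h5
                · exact claimX z hz h5 y h4
                · exact (hjoin y (mem_sdiff.1 h4).1 z h5).symm
              · rcases mem_union.1 hzXY with h5 | h5
                · exact hjoin z h5 y (mem_sdiff.1 h4).1
                · exact claimY z hz h5 y h4
        · -- My empty : v adjacent to all of Y
          rw [not_nonempty_iff_eq_empty, sdiff_eq_empty_iff_subset] at hMy
          refine ⟨Y, insert v X, ?_, ?_, hYne, ⟨v, mem_insert_self _ _⟩, ?_⟩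
          · rw [← hins]; ext x
            simp only [mem_union, mem_insert]
            constructor
            · rintro (h | rfl | h)
              · exact Or.inr (hYU' h)
              · exact Or.inl rfl
              · exact Or.inr (hXU' h)
            · rintro (rfl | h)
              · exact Or.inr (Or.inl rfl)
              · rcases mem_union.1 (hXY ▸ h) with h | h
                · exact Or.inr (Or.inr h)
                · exact Or.inl h
          · rw [Finset.disjoint_left]
            intro x hx hx2
            rcases mem_insert.1 hx2 with rfl | hx3
            · exact hvU' (hYU' hx)
            · exact (disjoint_right.1 hdisj hx) hx3
          · intro y hy x hx
            rcases mem_insert.1 hx with rfl | hx2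
            · exact ((hmemN y).1 (hMy hy)).2.symm
            · exact (hjoin x hx2 y hy).symm
      · -- Mx empty : v adjacent to all of X
        rw [not_nonempty_iff_eq_empty, sdiff_eq_empty_iff_subset] at hMx
        refine ⟨X, insert v Y, ?_, ?_, hXne, ⟨v, mem_insert_self _ _⟩, ?_⟩
        · rw [← hins]; ext x
          simp only [mem_union, mem_insert]
          constructor
          · rintro (h | rfl | h)
            · exact Or.inr (hXU' h)
            · exact Or.inl rfl
            · exact Or.inr (hYU' h)
          · rintro (rfl | h)
            · exact Or.inr (Or.inl rfl)
            · rcases mem_union.1 (hXY ▸ h) with h | h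
              · exact Or.inl h
              · exact Or.inr (Or.inr h)
        · rw [Finset.disjoint_left]
          intro x hx hx2
          rcases mem_insert.1 hx2 with rfl | hx3
          · exact hvU' (hXU' hx)
          · exact (disjoint_left.1 hdisj hx) hx3
        · intro x hx y hy
          rcases mem_insert.1 hy with rfl | hy2
          · exact ((hmemN x).1 (hMx hx)).2.symm
          · exact hjoin x hx y hy2
    · -- U' is not connected
      push_neg at hc
      obtain ⟨p1, hp1, p2, hp2, hnr⟩ := hc
      by_cases hall : ∀ u ∈ U', G.Adj v u
      · refine ⟨{v}, U', by rw [← hins]; ext x; simp [or_comm], by simpa using hvU', 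
          ⟨v, mem_singleton_self v⟩, ⟨p1, hp1⟩, ?_⟩
        intro x hx y hy
        rw [mem_singleton] at hx; subst hx
        exact hall y hy
      · push_neg at hall
        obtain ⟨u0, hu0, hnadj⟩ := hall
        set C := U'.filter (RW G U' u0) with hCdef
        have hmemC : ∀ x, x ∈ C ↔ x ∈ U' ∧ RW G U' u0 x := by intro x; simp [hCdef]
        have hu0C : u0 ∈ C := (hmemC u0).2 ⟨hu0, RW.refl hu0⟩
        set D := U' \ C with hDdef
        have hmemD : ∀ x, x ∈ D ↔ x ∈ U' ∧ ¬ x ∈ C := by intro x; simp [hDdef]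
        have hDne : D.Nonempty := by
          by_contra hD
          rw [not_nonempty_iff_eq_empty, sdiff_eq_empty_iff_subset] at hD
          have h1 : RW G U' u0 p1 := ((hmemC p1).1 (hD hp1)).2
          have h2 : RW G U' u0 p2 := ((hmemC p2).1 (hD hp2)).2
          exact hnr (h1.symm.trans h2)
        have hCD : ∀ x ∈ C, ∀ d ∈ D, ¬ G.Adj x d := by
          intro x hx d hd hadj
          exact ((hmemD d).1 hd).2 ((hmemC d).2
            ⟨((hmemD d).1 hd).1, ((hmemC x).1 hx).2.adj_right hadj ((hmemD d).1 hd).1⟩)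
        -- v has a neighbor in D
        have hvD : ∃ w ∈ D, G.Adj v w := by
          by_contra hn
          push_neg at hn
          obtain ⟨d, hd⟩ := hDne
          obtain ⟨p, hp⟩ := hconn u0 (hU'sub hu0) d (hU'sub ((hmemD d).1 hd).1)
          have : d ∈ C ∨ d = v := by
            refine walk_closed (P := fun z => z ∈ C ∨ z = v) (U := U) ?_ p hp (Or.inl hu0C)
            rintro x y (hx | rfl) hadj hy
            · by_cases hyv : y = v
              · exact Or.inr hyv
              · have hyU' : y ∈ U' := (hmemU' y).2 ⟨hy, hyv⟩
                left
                by_contra hyC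
                exact hCD x hx y ((hmemD y).2 ⟨hyU', hyC⟩) hadj
            · have hyv := (G.ne_of_adj hadj).symm
              have hyU' : y ∈ U' := (hmemU' y).2 ⟨hy, hyv⟩
              left
              by_contra hyC
              exact hn y ((hmemD y).2 ⟨hyU', hyC⟩) hadj
          rcases this with h | h2
          · exact ((hmemD d).1 hd).2 h
          · rw [h2] at hd; exact hvU' ((hmemD v).1 hd).1
        -- v has a neighbor in C
        have hvC : ∃ w ∈ C, G.Adj v w := by
          by_contra hn
          push_neg at hn
          obtain ⟨d, hd⟩ := hDne
          obtain ⟨p, hp⟩ := hconn d (hU'sub ((hmemD d).1 hd).1) u0 (hU'sub hu0)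
          have : u0 ∈ D ∨ u0 = v := by
            refine walk_closed (P := fun z => z ∈ D ∨ z = v) (U := U) ?_ p hp (Or.inl hd)
            rintro x y (hx | rfl) hadj hy
            · by_cases hyv : y = v
              · exact Or.inr hyv
              · have hyU' : y ∈ U' := (hmemU' y).2 ⟨hy, hyv⟩
                left
                by_contra hyD
                have hyC : y ∈ C := by
                  by_contra h
                  exact hyD ((hmemD y).2 ⟨hyU', h⟩)
                exact hCD y hyC x hx hadj.symm
            · have hyv := (G.ne_of_adj hadj).symm
              have hyU' : y ∈ U' := (hmemU' y).2 ⟨hy, hyv⟩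
              left
              by_contra hyD
              have hyC : y ∈ C := by
                by_contra h
                exact hyD ((hmemD y).2 ⟨hyU', h⟩)
              exact hn y hyC hadj
          rcases this with h | h2
          · exact ((hmemD u0).1 h).2 hu0C
          · rw [h2] at hu0; exact hvU' hu0
        obtain ⟨w, hwD, hvw⟩ := hvD
        obtain ⟨c1, hc1C, hvc1⟩ := hvC
        -- walk from u0 to c1 inside U'
        obtain ⟨p, hp⟩ := ((hmemC c1).1 hc1C).2
        have hsuppC : ∀ z ∈ p.support, z ∈ C := by
          intro z hz
          refine (hmemC z).2 ⟨hp z hz, ⟨p.takeUntil z hz, fun t ht => hp t (Walk.support_takeUntil_subset _ _ ht)⟩⟩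
        obtain ⟨x, y, hxy, hPx, hPy, hxs, hys⟩ :=
          exists_transition (P := fun z => G.Adj v z) p hnadj hvc1
        have hxC : x ∈ C := hsuppC x hxs
        have hyC : y ∈ C := hsuppC y hys
        -- P4 : x - y - v - w
        have hCne : ∀ z ∈ C, z ≠ v := fun z hz h => hvU' (h ▸ (filter_subset _ _ hz))
        have hCDne : ∀ z ∈ C, z ≠ w := fun z hz h => ((hmemD w).1 hwD).2 (h ▸ hz)
        exact (hP4 hxy hPy.symm hvw (fun h => hPx h.symm) (hCD x hxC w hwD)
          (hCD y hyC w hwD) (hCne x hxC) (hCDne x hxC) (hCDne y hyC)).elim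

/-- Number of neighbors of `v` inside `U`. -/
noncomputable def degIn (G : SimpleGraph V) (U : Finset V) (v : V) : ℕ :=
  (U.filter (G.Adj v)).card

/-- Number of (ordered) adjacent pairs in `A × B`, i.e. edges across when `A`, `B` disjoint. -/
noncomputable def cutN (G : SimpleGraph V) (A B : Finset V) : ℕ :=
  ∑ a ∈ A, degIn G B a

lemma degIn_union (h : Disjoint A B) : degIn G (A ∪ B) v = degIn G A v + degIn G B v := by
  classical
  rw [degIn, filter_union, card_union_of_disjoint (h.mono (filter_subset _ _) (filter_subset _ _))]
  rfl

lemma degIn_eq_sum : degIn G U v = ∑ u ∈ U, if G.Adj v u then 1 else 0 := by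
  rw [degIn, card_filter]

lemma degIn_mono (h : A ⊆ B) : degIn G A v ≤ degIn G B v :=
  card_le_card (filter_subset_filter _ h)

lemma degIn_lt_card (ha : a ∈ A) : degIn G A a ≤ A.card - 1 := by
  have hsub : A.filter (G.Adj a) ⊆ A.erase a := by
    intro x hx
    simp only [mem_filter] at hx
    exact mem_erase.2 ⟨(G.ne_of_adj hx.2).symm, hx.1⟩
  calc degIn G A a ≤ (A.erase a).card := card_le_card hsub
    _ = A.card - 1 := card_erase_of_mem ha

lemma degIn_join (h : ∀ x ∈ U, G.Adj v x) : degIn G U v = U.card := by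
  rw [degIn, filter_true_of_mem h]

lemma degIn_zero (h : ∀ x ∈ U, ¬ G.Adj v x) : degIn G U v = 0 := by
  rw [degIn, filter_false_of_mem h, card_empty]

lemma cutN_comm : cutN G A B = cutN G B A := by
  simp only [cutN, degIn_eq_sum]
  rw [Finset.sum_comm]
  congr 1; ext b; congr 1; ext a
  by_cases h : G.Adj a b
  · rw [if_pos h, if_pos h.symm]
  · rw [if_neg h, if_neg fun h' => h h'.symm]

lemma cutN_mono (hA : A ⊆ A') (hB : B ⊆ B') : cutN G A B ≤ cutN G A' B' :=
  le_trans (Finset.sum_le_sum fun _ _ => degIn_mono hB) (Finset.sum_le_sum_of_subset hA)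

lemma cutN_union_right (h : Disjoint B B') :
    cutN G A (B ∪ B') = cutN G A B + cutN G A B' := by
  simp only [cutN, degIn_union h, Finset.sum_add_distrib]

lemma cutN_join (h : ∀ a ∈ A, ∀ b ∈ B, G.Adj a b) : cutN G A B = A.card * B.card := by
  rw [cutN, Finset.sum_congr rfl fun a ha => degIn_join (fun x hx => h a ha x hx),
    Finset.sum_const, smul_eq_mul]

lemma count_lemma (hu : u ∈ A) (hd : Disjoint A B)
    (h : ∀ w ∈ A, G.Adj u w → 0 < degIn G B w) :
    degIn G (A ∪ B) u ≤ cutN G A B := by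
  have h1 : degIn G (A ∪ B) u = degIn G A u + degIn G B u := degIn_union hd
  have hT : insert u (A.filter (G.Adj u)) ⊆ A := by
    intro x hx
    rcases Finset.mem_insert.1 hx with rfl | hx
    · exact hu
    · exact (mem_filter.1 hx).1
  have hnm : u ∉ A.filter (G.Adj u) := by simp [G.irrefl]
  calc degIn G (A ∪ B) u = degIn G A u + degIn G B u := h1
    _ ≤ (∑ w ∈ A.filter (G.Adj u), degIn G B w) + degIn G B u := by
        gcongr
        calc degIn G A u = ∑ w ∈ A.filter (G.Adj u), 1 := by
              rw [Finset.sum_const, smul_eq_mul, mul_one]; rfl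
          _ ≤ _ := Finset.sum_le_sum fun w hw => by
              have := h w (mem_filter.1 hw).1 (mem_filter.1 hw).2
              omega
    _ = ∑ w ∈ insert u (A.filter (G.Adj u)), degIn G B w := by
        rw [Finset.sum_insert hnm]; ring
    _ ≤ cutN G A B := Finset.sum_le_sum_of_subset hT

/-- The "mixed" case of the cut bound: `A` inside one join side. -/
lemma mixed_case (hXne : X.Nonempty) (hXY : Disjoint X Y)
    (hjoin : ∀ x ∈ X, ∀ y ∈ Y, G.Adj x y)
    {B2 : Finset V} (hAne : A.Nonempty) (hB2ne : B2.Nonempty)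
    (hAB2 : Disjoint A B2) (hYeq : A ∪ B2 = Y)
    (ihc : (∃ a ∈ A, ∃ b ∈ B2, G.Adj a b) → ∃ u ∈ Y, degIn G Y u ≤ cutN G A B2) :
    ∃ u ∈ X ∪ Y, degIn G (X ∪ Y) u ≤ cutN G A (X ∪ B2) := by
  have hAY : A ⊆ Y := hYeq ▸ subset_union_left
  have hB2Y : B2 ⊆ Y := hYeq ▸ subset_union_right
  have hXB2 : Disjoint X B2 := hXY.mono_right hB2Y
  have hsplit : cutN G A (X ∪ B2) = cutN G A X + cutN G A B2 := cutN_union_right hXB2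
  have hAX : cutN G A X = A.card * X.card :=
    cutN_join fun a ha x hx => (hjoin x hx a (hAY ha)).symm
  have hX1 : 1 ≤ X.card := card_pos.2 hXne
  have hA1 : 1 ≤ A.card := card_pos.2 hAne
  by_cases hedge : ∃ a ∈ A, ∃ b ∈ B2, G.Adj a b
  · obtain ⟨u, huY, hle⟩ := ihc hedge
    refine ⟨u, mem_union_right _ huY, ?_⟩
    have h1 : degIn G (X ∪ Y) u = X.card + degIn G Y u := by
      rw [degIn_union hXY, degIn_join fun x hx => (hjoin x hx u huY).symm]
    rw [h1, hsplit, hAX]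
    have : X.card ≤ A.card * X.card := Nat.le_mul_of_pos_left _ hA1
    omega
  · push_neg at hedge
    obtain ⟨a, ha⟩ := hAne
    refine ⟨a, mem_union_right _ (hAY ha), ?_⟩
    have h1 : degIn G (X ∪ Y) a = X.card + degIn G Y a := by
      rw [degIn_union hXY, degIn_join fun x hx => (hjoin x hx a (hAY ha)).symm]
    have h2 : degIn G Y a = degIn G A a := by
      rw [← hYeq, degIn_union hAB2, degIn_zero fun b hb => hedge a ha b hb, add_zero]
    have h3 : degIn G A a ≤ A.card - 1 := degIn_lt_card ha
    have h4 : cutN G A B2 = cutN G A B2 := rfl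
    rw [h1, hsplit, hAX, h2]
    obtain ⟨a', ha'⟩ := Nat.exists_eq_add_of_le hA1
    obtain ⟨x', hx'⟩ := Nat.exists_eq_add_of_le hX1
    have hmul : A.card * X.card = a' * x' + a' + x' + 1 := by rw [ha', hx']; ring
    omega

/-- Main lemma: any nontrivial cut is at least some inside degree. -/
lemma cut_ge (hP4 : ∀ {a b c d : V}, G.Adj a b → G.Adj b c → G.Adj c d →
      ¬ G.Adj a c → ¬ G.Adj a d → ¬ G.Adj b d → a ≠ c → a ≠ d → b ≠ d → False) :
    ∀ (n : ℕ) (A B : Finset V), (A ∪ B).card = n → Disjoint A B →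
      A.Nonempty → B.Nonempty → (∃ a ∈ A, ∃ b ∈ B, G.Adj a b) →
      ∃ u ∈ A ∪ B, degIn G (A ∪ B) u ≤ cutN G A B := by
  intro n
  induction n using Nat.strong_induction_on with
  | _ n ih =>
  intro A B hn hd hAne hBne hedge
  obtain ⟨a0, ha0, b0, hb0, hadj0⟩ := hedge
  set U := A ∪ B with hUdef
  set C := U.filter (RW G U a0) with hCdef
  have hmemC : ∀ x, x ∈ C ↔ x ∈ U ∧ RW G U a0 x := by intro x; simp [hCdef]
  have ha0U : a0 ∈ U := mem_union_left _ ha0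
  have hb0U : b0 ∈ U := mem_union_right _ hb0
  have ha0C : a0 ∈ C := (hmemC a0).2 ⟨ha0U, RW.refl ha0U⟩
  have hCU : C ⊆ U := filter_subset _ _
  have hCclosed : ∀ x ∈ C, ∀ y ∈ U, G.Adj x y → y ∈ C := by
    intro x hx y hy hxy
    exact (hmemC y).2 ⟨hy, ((hmemC x).1 hx).2.adj_right hxy hy⟩
  by_cases hCeq : C = U
  · -- connected case
    have hconn : ∀ x ∈ U, ∀ y ∈ U, RW G U x y := by
      intro x hx y hy
      rw [← hCeq] at hx hy
      exact (((hmemC x).1 hx).2.symm).trans ((hmemC y).1 hy).2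
    have hne0 : a0 ≠ b0 := fun h => (disjoint_left.1 hd ha0) (h ▸ hb0)
    have hcard2 : 2 ≤ U.card := one_lt_card.2 ⟨a0, ha0U, b0, hb0U, hne0⟩
    obtain ⟨X, Y, hXY, hdXY, hXne, hYne, hjoin⟩ :=
      seinsche_join hP4 U.card U rfl hcard2 hconn
    have hcardU : U.card = X.card + Y.card := by
      rw [← hXY, card_union_of_disjoint hdXY]
    set A1 := A ∩ X with hA1def
    set A2 := A ∩ Y with hA2def
    set B1 := B ∩ X with hB1def
    set B2 := B ∩ Y with hB2def
    have hAU : A ⊆ U := subset_union_left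
    have hBU : B ⊆ U := subset_union_right
    have hAsplit : A1 ∪ A2 = A := by
      rw [hA1def, hA2def, ← inter_union_distrib_left, hXY]
      exact inter_eq_left.2 hAU
    have hBsplit : B1 ∪ B2 = B := by
      rw [hB1def, hB2def, ← inter_union_distrib_left, hXY]
      exact inter_eq_left.2 hBU
    -- helper to apply the induction hypothesis
    have IH : ∀ (A' B' : Finset V), A' ∪ B' = Y → Disjoint A' B' → A'.Nonempty → B'.Nonempty →
        (∃ a ∈ A', ∃ b ∈ B', G.Adj a b) → ∃ u ∈ Y, degIn G Y u ≤ cutN G A' B' := by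
      intro A' B' hun hd' h1 h2 h3
      have hlt : (A' ∪ B').card < n := by
        rw [hun, ← hn, hcardU]
        have := card_pos.2 hXne
        omega
      have := ih _ hlt A' B' rfl hd' h1 h2 h3
      rwa [hun] at this
    have IHX : ∀ (A' B' : Finset V), A' ∪ B' = X → Disjoint A' B' → A'.Nonempty → B'.Nonempty →
        (∃ a ∈ A', ∃ b ∈ B', G.Adj a b) → ∃ u ∈ X, degIn G X u ≤ cutN G A' B' := by
      intro A' B' hun hd' h1 h2 h3
      have hlt : (A' ∪ B').card < n := by
        rw [hun, ← hn, hcardU]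
        have := card_pos.2 hYne
        omega
      have := ih _ hlt A' B' rfl hd' h1 h2 h3
      rwa [hun] at this
    -- full case helper
    have full : (∀ w ∈ A, ∃ b ∈ B, G.Adj w b) → ∃ u ∈ U, degIn G U u ≤ cutN G A B := by
      intro h
      refine ⟨a0, ha0U, count_lemma ha0 hd fun w hw _ => ?_⟩
      obtain ⟨b, hb, hwb⟩ := h w hw
      exact card_pos.2 ⟨b, mem_filter.2 ⟨hb, hwb⟩⟩
    by_cases hB1 : B1.Nonempty
    · by_cases hB2 : B2.Nonempty
      · -- B meets both sides: every vertex of A has a neighbor in B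
        refine full fun w hw => ?_
        rcases mem_union.1 (hAsplit ▸ hw : w ∈ A1 ∪ A2) with h | h
        · obtain ⟨b, hb⟩ := hB2
          exact ⟨b, (mem_inter.1 hb).1, hjoin w (mem_inter.1 h).2 b (mem_inter.1 hb).2⟩
        · obtain ⟨b, hb⟩ := hB1
          exact ⟨b, (mem_inter.1 hb).1, (hjoin b (mem_inter.1 hb).2 w (mem_inter.1 h).2).symm⟩
      · -- B ⊆ X
        have hB2e : B2 = ∅ := not_nonempty_iff_eq_empty.1 hB2
        have hBX : B = B1 := by rw [← hBsplit, hB2e, union_empty]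
        have hBsubX : B ⊆ X := hBX ▸ inter_subset_right
        by_cases hA1 : A1.Nonempty
        · -- mixed case, with roles of A and B swapped and sides X, Y
          have hA2card : A2 = Y ∩ A := by rw [hA2def, inter_comm]
          -- X = A1 ∪ B1, and A ⊇ Y.
          have hYA : Y ⊆ A := by
            intro y hy
            have : y ∈ U := hXY ▸ mem_union_right _ hy
            rcases mem_union.1 this with h | h
            · exact h
            · exact absurd ((hBX ▸ h : y ∈ B1)) (fun hh => disjoint_left.1 hdXY (mem_inter.1 hh).2 hy)
          have hA2Y : A2 = Y := by
            apply Subset.antisymm (hA2def ▸ inter_subset_right)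
            intro y hy; exact mem_inter.2 ⟨hYA hy, hy⟩
          have hXeq : B ∪ A1 = X := by
            rw [hBX]
            ext x
            simp only [mem_union, hB1def, hA1def, mem_inter]
            constructor
            · rintro (⟨_, h⟩ | ⟨_, h⟩) <;> exact h
            · intro hx
              have : x ∈ U := hXY ▸ mem_union_left _ hx
              rcases mem_union.1 this with h | h
              · exact Or.inr ⟨h, hx⟩
              · exact Or.inl ⟨h, hx⟩
          have hdisj' : Disjoint B A1 := hd.symm.mono_right (hA1def ▸ inter_subset_left)
          have := mixed_case (G := G) hYne hdXY.symm
            (fun y hy x hx => (hjoin x hx y hy).symm) hBne hA1 hdisj' hXeq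
            (fun hedge => IHX B A1 hXeq hdisj' hBne hA1 hedge)
          obtain ⟨u, hu, hle⟩ := this
          refine ⟨u, ?_, ?_⟩
          · have h' : u ∈ Y ∪ X := hu
            rw [union_comm] at h'
            exact hXY ▸ h'
          · have e1 : Y ∪ X = U := by rw [union_comm]; exact hXY
            have e2 : Y ∪ A1 = A := by rw [← hA2Y, union_comm, hAsplit]
            rw [e1, e2] at hle
            rw [cutN_comm]
            exact hle
        · -- A ⊆ Y : B = X, A = Y (since A1 = ∅ means X ⊆ B)
          have hA1e : A1 = ∅ := not_nonempty_iff_eq_empty.1 hA1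
          have hAY : A = A2 := by rw [← hAsplit, hA1e, empty_union]
          have hXB : X ⊆ B := by
            intro x hx
            have : x ∈ U := hXY ▸ mem_union_left _ hx
            rcases mem_union.1 this with h | h
            · exact absurd (hAY ▸ h : x ∈ A2) (fun hh => disjoint_left.1 hdXY hx (mem_inter.1 hh).2)
            · exact h
          refine full fun w hw => ?_
          obtain ⟨x, hx⟩ := hXne
          exact ⟨x, hXB hx, (hjoin x hx w (mem_inter.1 (hAY ▸ hw)).2).symm⟩
    · -- B1 = ∅ : B ⊆ Y
      have hB1e : B1 = ∅ := not_nonempty_iff_eq_empty.1 hB1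
      have hBY : B = B2 := by rw [← hBsplit, hB1e, empty_union]
      have hB2ne : B2.Nonempty := hBY ▸ hBne
      by_cases hA2 : A2.Nonempty
      · -- mixed case directly
        have hYeq : B ∪ A2 = Y := by
          rw [hBY]
          ext y
          simp only [mem_union, hB2def, hA2def, mem_inter]
          constructor
          · rintro (⟨_, h⟩ | ⟨_, h⟩) <;> exact h
          · intro hy
            have : y ∈ U := hXY ▸ mem_union_right _ hy
            rcases mem_union.1 this with h | h
            · exact Or.inr ⟨h, hy⟩
            · exact Or.inl ⟨h, hy⟩
        have hA1X : A1 = X := by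
          apply Subset.antisymm (hA1def ▸ inter_subset_right)
          intro x hx
          have : x ∈ U := hXY ▸ mem_union_left _ hx
          rcases mem_union.1 this with h | h
          · exact mem_inter.2 ⟨h, hx⟩
          · exact absurd (hBY ▸ h : x ∈ B2) (fun hh => disjoint_left.1 hdXY hx (mem_inter.1 hh).2)
        have hdisj' : Disjoint B A2 := hd.symm.mono_right (hA2def ▸ inter_subset_left)
        have := mixed_case (G := G) hXne hdXY hjoin hBne hA2 hdisj' hYeq
          (fun hedge => IH B A2 hYeq hdisj' hBne hA2 hedge)
        obtain ⟨u, hu, hle⟩ := this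
        refine ⟨u, hXY ▸ hu, ?_⟩
        have e2 : X ∪ A2 = A := by rw [← hA1X, hAsplit]
        rw [hXY, e2] at hle
        rw [cutN_comm]
        exact hle
      · -- A = X, B = Y
        have hA2e : A2 = ∅ := not_nonempty_iff_eq_empty.1 hA2
        have hAX : A = A1 := by rw [← hAsplit, hA2e, union_empty]
        have hYB : Y ⊆ B := by
          intro y hy
          have : y ∈ U := hXY ▸ mem_union_right _ hy
          rcases mem_union.1 this with h | h
          · exact absurd (hAX ▸ h : y ∈ A1) (fun hh => disjoint_left.1 hdXY (mem_inter.1 hh).2 hy)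
          · exact h
        refine full fun w hw => ?_
        obtain ⟨y, hy⟩ := hYne
        exact ⟨y, hYB hy, hjoin w (mem_inter.1 (hAX ▸ hw)).2 y hy⟩
  · -- disconnected: recurse on the component C of a0
    have hb0C : b0 ∈ C := hCclosed a0 ha0C b0 hb0U hadj0
    set A' := A ∩ C with hA'def
    set B' := B ∩ C with hB'def
    have hA'ne : A'.Nonempty := ⟨a0, mem_inter.2 ⟨ha0, ha0C⟩⟩
    have hB'ne : B'.Nonempty := ⟨b0, mem_inter.2 ⟨hb0, hb0C⟩⟩
    have hC : A' ∪ B' = C := by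
      rw [hA'def, hB'def, ← union_inter_distrib_right, ← hUdef]
      exact inter_eq_right.2 hCU
    have hcardC : C.card < n := by
      rw [← hn]
      exact card_lt_card (Finset.ssubset_iff_subset_ne.2 ⟨hCU, hCeq⟩)
    have hd' : Disjoint A' B' := hd.mono inter_subset_left inter_subset_left
    obtain ⟨u, huC, hle⟩ := ih C.card (by omega) A' B' (by rw [hC]) hd' hA'ne hB'ne
      ⟨a0, mem_inter.2 ⟨ha0, ha0C⟩, b0, mem_inter.2 ⟨hb0, hb0C⟩, hadj0⟩
    rw [hC] at huC
    rw [hC] at hle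
    refine ⟨u, hCU huC, ?_⟩
    have hdeg : degIn G U u = degIn G C u := by
      unfold degIn
      congr 1
      apply Subset.antisymm
      · intro x hx
        obtain ⟨hxU, hxadj⟩ := mem_filter.1 hx
        exact mem_filter.2 ⟨hCclosed u huC x hxU hxadj, hxadj⟩
      · exact filter_subset_filter _ hCU
    rw [hdeg]
    calc degIn G C u ≤ cutN G A' B' := hle
      _ ≤ cutN G A B := cutN_mono inter_subset_left inter_subset_left

section Conn
variable [Fintype V]

lemma degIn_univ (u : V) : degIn G univ u = (G.neighborSet u).ncard := by
  have : G.neighborSet u = ↑(univ.filter (G.Adj u)) := by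
    ext x; simp [neighborSet]
  rw [this, Set.ncard_coe_finset, degIn]

lemma cutN_eq_card_pairs :
    cutN G A B = ((A ×ˢ B).filter (fun p => G.Adj p.1 p.2)).card := by
  rw [card_eq_sum_card_fiberwise (f := Prod.fst) (t := A)
    (fun x hx => (mem_product.1 (mem_filter.1 hx).1).1)]
  unfold cutN degIn
  refine Finset.sum_congr rfl fun a ha => ?_
  have : ((A ×ˢ B).filter (fun p => G.Adj p.1 p.2)).filter (fun p => p.1 = a)
      = (B.filter (G.Adj a)).image (fun b => (a, b)) := by
    ext ⟨p1, p2⟩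
    simp only [mem_filter, mem_product, mem_image]
    constructor
    · rintro ⟨⟨⟨h1, h2⟩, h3⟩, rfl⟩
      exact ⟨p2, ⟨h2, h3⟩, rfl⟩
    · rintro ⟨b', ⟨h1, h2⟩, h3⟩
      obtain ⟨rfl, rfl⟩ := Prod.mk.injEq .. ▸ h3
      exact ⟨⟨⟨ha, h1⟩, h2⟩, rfl⟩
  rw [this, card_image_of_injective _ (fun x y h => (Prod.mk.injEq .. ▸ h).2)]

/-- `edgeConn G ≤ minDeg G` for connected graphs on at least two vertices. -/
lemma edgeConn_le_minDeg (hconn : G.Connected) (hcard : 2 ≤ Fintype.card V) :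
    edgeConn G ≤ minDeg G := by
  have hne : Nonempty V := hconn.nonempty
  obtain ⟨v0⟩ := hne
  have hmem : minDeg G ∈ {d | ∃ v : V, d = (G.neighborSet v).ncard} :=
    Nat.sInf_mem ⟨_, ⟨v0, rfl⟩⟩
  obtain ⟨v, hv⟩ := hmem
  set F : Finset (Sym2 V) := ((G.neighborSet v).toFinset).image (fun w => s(v, w)) with hF
  have hFsub : ↑F ⊆ G.edgeSet := by
    intro e he
    simp only [hF, coe_image, Set.mem_image, Set.coe_toFinset] at he
    obtain ⟨w, hw, rfl⟩ := he
    exact hw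
  have hFcard : F.card = (G.neighborSet v).ncard := by
    rw [hF, card_image_of_injective, Set.ncard_eq_toFinset_card']
    intro x y hxy
    exact (Sym2.congr_right (a := v)).1 hxy
  have hmemF : ∀ w, G.Adj v w → s(v, w) ∈ F := by
    intro w hw
    simp only [hF, mem_image, Set.mem_toFinset]
    exact ⟨w, hw, rfl⟩
  have hdisc : ¬ (G.deleteEdges ↑F).Connected := by
    intro hC
    obtain ⟨u, hu⟩ := Fintype.exists_ne_of_one_lt_card (by omega) v
    obtain ⟨p⟩ := hC.preconnected v u
    obtain ⟨c, hc, -⟩ := exists_first_step p (Ne.symm hu)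
    rw [deleteEdges_adj] at hc
    exact hc.2 (hmemF c hc.1)
  calc edgeConn G ≤ F.card := Nat.sInf_le ⟨F, hFsub, rfl, hdisc⟩
    _ = minDeg G := by rw [hFcard, hv]

/-- `minDeg G ≤ edgeConn G` for connected `P₄`-free graphs. -/
lemma minDeg_le_edgeConn (hconn : G.Connected) (hcard : 2 ≤ Fintype.card V)
    (hP4 : ∀ {a b c d : V}, G.Adj a b → G.Adj b c → G.Adj c d →
      ¬ G.Adj a c → ¬ G.Adj a d → ¬ G.Adj b d → a ≠ c → a ≠ d → b ≠ d → False) :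
    minDeg G ≤ edgeConn G := by
  have hne : Nonempty V := hconn.nonempty
  -- the defining set is nonempty: deleting all edges disconnects
  have hnonempty : {k | ∃ F : Finset (Sym2 V), ↑F ⊆ G.edgeSet ∧ F.card = k ∧
      ¬ (G.deleteEdges ↑F).Connected}.Nonempty := by
    refine ⟨(G.edgeSet.toFinset).card, G.edgeSet.toFinset, by simp, rfl, ?_⟩
    intro hC
    obtain ⟨v0⟩ := hne
    obtain ⟨u, hu⟩ := Fintype.exists_ne_of_one_lt_card (by omega) v0
    obtain ⟨p⟩ := hC.preconnected v0 u
    obtain ⟨c, hc, -⟩ := exists_first_step p (Ne.symm hu)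
    rw [deleteEdges_adj] at hc
    exact hc.2 (by simpa using hc.1)
  refine le_csInf hnonempty ?_
  rintro k ⟨F, hFsub, rfl, hdisc⟩
  -- extract the two sides of the cut
  have : ¬ (G.deleteEdges ↑F).Preconnected := fun h => hdisc ⟨h⟩
  rw [Preconnected] at this
  push_neg at this
  obtain ⟨x, y, hxy⟩ := this
  set A : Finset V := univ.filter (fun z => (G.deleteEdges ↑F).Reachable x z) with hA
  set B : Finset V := univ \ A with hB
  have hxA : x ∈ A := by
    simp only [hA, mem_filter, mem_univ, true_and]
    exact Reachable.refl x
  have hyB : y ∈ B := by simp [hB, hA, hxy]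
  have hdisj : Disjoint A B := disjoint_sdiff
  have hunion : A ∪ B = univ := by
    rw [hB, union_sdiff_of_subset (subset_univ A)]
  -- edges of G crossing from A to B are all in F
  have hcross : ∀ a' ∈ A, ∀ b' ∈ B, G.Adj a' b' → s(a', b') ∈ F := by
    intro a' ha' b' hb' hadj
    by_contra hnF
    have : (G.deleteEdges ↑F).Adj a' b' := by
      rw [deleteEdges_adj]; exact ⟨hadj, by simpa using hnF⟩
    have hrb : (G.deleteEdges ↑F).Reachable x b' :=
      ((mem_filter.1 ha').2).trans this.reachable
    rw [hB, mem_sdiff] at hb'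
    exact hb'.2 (by simp [hA, hrb])
  -- there is a crossing edge since G is connected
  have hedge : ∃ a' ∈ A, ∃ b' ∈ B, G.Adj a' b' := by
    obtain ⟨p⟩ := hconn.preconnected x y
    obtain ⟨a', b', hadj, hPa, hPb, -, -⟩ :=
      exists_transition (P := fun z => z ∈ B) p (by simp [hxA, hB]) hyB
    have ha'A : a' ∈ A := by
      by_contra h
      exact hPa (by simp [hB, h])
    exact ⟨a', ha'A, b', hPb, hadj⟩
  obtain ⟨u, -, hle⟩ := cut_ge hP4 (A ∪ B).card A B rfl hdisj ⟨x, hxA⟩ ⟨y, hyB⟩ hedge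
  have h1 : minDeg G ≤ degIn G (A ∪ B) u := by
    rw [hunion, degIn_univ]
    exact Nat.sInf_le ⟨u, rfl⟩
  have h2 : cutN G A B ≤ F.card := by
    rw [cutN_eq_card_pairs]
    apply card_le_card_of_injOn (fun p => s(p.1, p.2))
    · rintro ⟨p1, p2⟩ hp
      obtain ⟨hmem, hadj⟩ := mem_filter.1 hp
      obtain ⟨h1, h2⟩ := mem_product.1 hmem
      exact hcross p1 h1 p2 h2 hadj
    · rintro ⟨p1, p2⟩ hp ⟨q1, q2⟩ hq heq
      obtain ⟨hmem, -⟩ := mem_filter.1 hp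
      obtain ⟨hp1, hp2⟩ := mem_product.1 hmem
      obtain ⟨hmem', -⟩ := mem_filter.1 hq
      obtain ⟨hq1, hq2⟩ := mem_product.1 hmem'
      rw [Sym2.eq_iff] at heq
      rcases heq with ⟨rfl, rfl⟩ | ⟨rfl, rfl⟩
      · rfl
      · exact absurd hq1 (disjoint_right.1 hdisj hp2)
  omega

end Conn

def bridgeGraph : SimpleGraph (Fin 8) where
  Adj v w := v ≠ w ∧ ((v.val < 4 ∧ w.val < 4) ∨ (4 ≤ v.val ∧ 4 ≤ w.val) ∨
    (v.val = 3 ∧ w.val = 4) ∨ (v.val = 4 ∧ w.val = 3))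
  symm := ⟨by
    rintro v w ⟨h1, h2⟩
    exact ⟨h1.symm, by tauto⟩⟩
  loopless := ⟨fun v h => h.1 rfl⟩

instance : DecidableRel bridgeGraph.Adj := fun v w =>
  inferInstanceAs (Decidable (v ≠ w ∧ ((v.val < 4 ∧ w.val < 4) ∨ (4 ≤ v.val ∧ 4 ≤ w.val) ∨
    (v.val = 3 ∧ w.val = 4) ∨ (v.val = 4 ∧ w.val = 3))))

lemma bridgeGraph_not_conn :
    ¬ (bridgeGraph.deleteEdges ↑({s((3 : Fin 8), (4 : Fin 8))} : Finset (Sym2 (Fin 8)))).Connected := by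
  intro h
  obtain ⟨p⟩ := h.preconnected 0 7
  have hcl : ∀ x y : Fin 8,
      x.val < 4 → (bridgeGraph.deleteEdges ↑({s((3 : Fin 8), (4 : Fin 8))} : Finset (Sym2 (Fin 8)))).Adj x y → y.val < 4 := by
    intro x y hx hadj
    rw [deleteEdges_adj] at hadj
    obtain ⟨⟨hne, hc⟩, hmem⟩ := hadj
    by_contra hy
    push_neg at hy
    rcases hc with ⟨_, h2⟩ | ⟨h1, _⟩ | ⟨h1, h2⟩ | ⟨_, h2⟩
    · omega
    · omega
    · -- x = 3, y = 4
      apply hmem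
      have hx3 : x = 3 := Fin.ext h1
      have hy4 : y = 4 := Fin.ext h2
      rw [hx3, hy4]
      simp
    · omega
  have := walk_closed_prop (P := fun z : Fin 8 => z.val < 4) (fun x y hx ha => hcl x y hx ha) p
    (by norm_num)
  exact absurd this (by decide)

lemma bridgeGraph_minDeg : 3 ≤ minDeg bridgeGraph := by
  refine le_csInf ⟨_, ⟨0, rfl⟩⟩ ?_
  rintro d ⟨v, rfl⟩
  have h1 : (bridgeGraph.neighborSet v).ncard = bridgeGraph.degree v := by
    rw [Set.ncard_eq_toFinset_card', degree]
    congr 1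
  rw [h1]
  have : ∀ v, 3 ≤ bridgeGraph.degree v := by decide
  exact this v

lemma bridgeGraph_edgeConn : edgeConn bridgeGraph ≤ 1 := by
  apply Nat.sInf_le
  refine ⟨{s((3 : Fin 8), (4 : Fin 8))}, ?_, by simp, bridgeGraph_not_conn⟩
  intro e he
  simp only [Finset.coe_singleton, Set.mem_singleton_iff] at he
  subst he
  show bridgeGraph.Adj 3 4
  decide

lemma bridgeGraph_connected : bridgeGraph.Connected := by
  rw [connected_iff]
  refine ⟨fun v w => ?_, ⟨0⟩⟩
  have key : ∀ v : Fin 8, bridgeGraph.Reachable 0 v := by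
    intro v
    have h03 : bridgeGraph.Adj 0 3 := by decide
    have h34 : bridgeGraph.Adj 3 4 := by decide
    have r4 : bridgeGraph.Reachable 0 4 := h03.reachable.trans h34.reachable
    fin_cases v
    · rfl
    · exact (show bridgeGraph.Adj 0 1 by decide).reachable
    · exact (show bridgeGraph.Adj 0 2 by decide).reachable
    · exact h03.reachable
    · exact r4
    · exact r4.trans (show bridgeGraph.Adj 4 5 by decide).reachable
    · exact r4.trans (show bridgeGraph.Adj 4 6 by decide).reachable
    · exact r4.trans (show bridgeGraph.Adj 4 7 by decide).reachable
  exact (key v).symm.trans (key w)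

lemma not_triangle {W : Type*} {S : SimpleGraph W} (hS : S.IsAcyclic) {u v w : W}
    (h1 : S.Adj u v) (h2 : S.Adj v w) (h3 : S.Adj w u) : False := by
  refine hS (Walk.cons h1 (Walk.cons h2 (Walk.cons h3 Walk.nil))) ?_
  have huv := h1.ne
  have hvw := h2.ne
  have hwu := h3.ne
  have huw := h3.ne'
  rw [Walk.isCycle_def, Walk.isTrail_def]
  refine ⟨?_, by simp, ?_⟩
  · simp [Sym2.eq_iff]
    aesop
  · simp [huv, hvw, hwu, huw]
    aesop

lemma small_embed {W : Type} [Fintype W] {S : SimpleGraph W} (hconn : S.Connected)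
    (h : Fintype.card W ≤ 2) : Nonempty (S ↪g pathGraph 4) := by
  classical
  have h1 : 1 ≤ Fintype.card W := Fintype.card_pos_iff.2 hconn.nonempty
  by_cases hc : Fintype.card W = 1
  · have : Subsingleton W := Fintype.card_le_one_iff_subsingleton.1 (by omega)
    refine ⟨⟨⟨fun _ => 0, fun x y _ => Subsingleton.elim x y⟩, ?_⟩⟩
    intro x y
    have hxy : x = y := Subsingleton.elim x y
    subst hxy
    simp [pathGraph_adj]
  · have hc2 : (univ : Finset W).card = 2 := by rw [card_univ]; omega
    obtain ⟨a, b, hab, huniv⟩ := Finset.card_eq_two.1 hc2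
    have hmem : ∀ x : W, x = a ∨ x = b := by
      intro x
      have : x ∈ (univ : Finset W) := mem_univ x
      rw [huniv] at this
      simpa using this
    have hadj : S.Adj a b := by
      obtain ⟨p⟩ := hconn.preconnected a b
      obtain ⟨c, hc', hcs⟩ := exists_first_step p hab
      rcases hmem c with rfl | rfl
      · exact absurd rfl hc'.ne
      · exact hc'
    have hg2a : (fun x => if x = a then (0 : Fin 4) else 1) a = 0 := by
      dsimp only; rw [if_pos rfl]
    have hg2b : (fun x => if x = a then (0 : Fin 4) else 1) b = 1 := by
      dsimp only; rw [if_neg (Ne.symm hab)]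
    refine ⟨⟨⟨fun x => if x = a then (0 : Fin 4) else 1, ?_⟩, ?_⟩⟩
    · intro x y hxy
      rcases hmem x with hx | hx <;> rcases hmem y with hy | hy <;>
          rw [hx, hy] at hxy ⊢ <;>
        first
          | rfl
          | (rw [hg2a, hg2b] at hxy; exact absurd hxy (by decide))
          | (rw [hg2b, hg2a] at hxy; exact absurd hxy (by decide))
    · intro x y
      show (pathGraph 4).Adj ((fun x => if x = a then (0 : Fin 4) else 1) x)
        ((fun x => if x = a then (0 : Fin 4) else 1) y) ↔ S.Adj x y
      rcases hmem x with hx | hx <;> rcases hmem y with hy | hy <;> rw [hx, hy]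
      · rw [hg2a]; exact iff_of_false (by rw [pathGraph_adj]; omega) (S.irrefl)
      · rw [hg2a, hg2b]; exact iff_of_true (pathGraph_adj.2 (by decide)) hadj
      · rw [hg2b, hg2a]; exact iff_of_true (pathGraph_adj.2 (by decide)) hadj.symm
      · rw [hg2b]; exact iff_of_false (by rw [pathGraph_adj]; omega) (S.irrefl)

lemma acyclic_embed {W : Type} [Fintype W] {S : SimpleGraph W} (hconn : S.Connected)
    (hac : S.IsAcyclic) (f : S ↪g bridgeGraph) : Nonempty (S ↪g pathGraph 4) := by
  classical
  by_cases hsmall : Fintype.card W ≤ 2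
  · exact small_embed hconn hsmall
  push_neg at hsmall
  have hadj_iff : ∀ x y : W, S.Adj x y ↔ bridgeGraph.Adj (f x) (f y) :=
    fun x y => (f.map_adj_iff).symm
  have hfne : ∀ {x y : W}, x ≠ y → f x ≠ f y := fun h h' => h (f.injective h')
  have hL : ∀ x y z : W, x ≠ y → y ≠ z → z ≠ x →
      (f x).val < 4 → (f y).val < 4 → (f z).val < 4 → False := by
    intro x y z hxy hyz hzx hx hy hz
    refine not_triangle hac ((hadj_iff x y).2 ⟨hfne hxy, Or.inl ⟨hx, hy⟩⟩)
      ((hadj_iff y z).2 ⟨hfne hyz, Or.inl ⟨hy, hz⟩⟩)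
      ((hadj_iff z x).2 ⟨hfne hzx, Or.inl ⟨hz, hx⟩⟩)
  have hR : ∀ x y z : W, x ≠ y → y ≠ z → z ≠ x →
      4 ≤ (f x).val → 4 ≤ (f y).val → 4 ≤ (f z).val → False := by
    intro x y z hxy hyz hzx hx hy hz
    refine not_triangle hac ((hadj_iff x y).2 ⟨hfne hxy, Or.inr (Or.inl ⟨hx, hy⟩)⟩)
      ((hadj_iff y z).2 ⟨hfne hyz, Or.inr (Or.inl ⟨hy, hz⟩)⟩)
      ((hadj_iff z x).2 ⟨hfne hzx, Or.inr (Or.inl ⟨hz, hx⟩)⟩)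
  -- three distinct vertices
  obtain ⟨T, -, hT3⟩ := Finset.exists_subset_card_eq (s := (univ : Finset W)) (n := 3) (by rw [card_univ]; omega)
  obtain ⟨w1, w2, w3, h12, h13, h23, hTeq⟩ := Finset.card_eq_three.1 hT3
  -- both sides are inhabited
  have hLex : ∃ x : W, (f x).val < 4 := by
    by_contra hn
    push_neg at hn
    exact hR w1 w2 w3 h12 h23 (Ne.symm h13) (hn w1) (hn w2) (hn w3)
  have hRex : ∃ x : W, 4 ≤ (f x).val := by
    by_contra hn
    push_neg at hn
    exact hL w1 w2 w3 h12 h23 (Ne.symm h13) (hn w1) (hn w2) (hn w3)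
  obtain ⟨xl, hxl⟩ := hLex
  obtain ⟨xr, hxr⟩ := hRex
  -- find the bridge in the image
  obtain ⟨p⟩ := hconn.preconnected xl xr
  obtain ⟨x3, x4, hadj34, hP3, hP4, -, -⟩ :=
    exists_transition (P := fun z : W => 4 ≤ (f z).val) p (by omega) hxr
  push_neg at hP3
  have hf3 : f x3 = 3 := by
    obtain ⟨-, hc⟩ := (hadj_iff _ _).1 hadj34
    rcases hc with ⟨h1, h2⟩ | ⟨h1, h2⟩ | ⟨h1, h2⟩ | ⟨h1, h2⟩ <;> first | omega | exact Fin.ext h1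
  have hf4 : f x4 = 4 := by
    obtain ⟨-, hc⟩ := (hadj_iff _ _).1 hadj34
    rcases hc with ⟨h1, h2⟩ | ⟨h1, h2⟩ | ⟨h1, h2⟩ | ⟨h1, h2⟩ <;> first | omega | exact Fin.ext h2
  -- category of each vertex
  have cat : ∀ x : W, f x = 3 ∨ f x = 4 ∨ ((f x).val < 4 ∧ f x ≠ 3) ∨
      (4 ≤ (f x).val ∧ f x ≠ 4) := by
    intro x
    rcases Nat.lt_or_ge (f x).val 4 with h | h
    · by_cases h3 : f x = 3
      · exact Or.inl h3
      · exact Or.inr (Or.inr (Or.inl ⟨h, h3⟩))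
    · by_cases h4 : f x = 4
      · exact Or.inr (Or.inl h4)
      · exact Or.inr (Or.inr (Or.inr ⟨h, h4⟩))
  set g : W → Fin 4 := fun x => if f x = 3 then 1 else if f x = 4 then 2 else
    if (f x).val < 4 then 0 else 3 with hg
  have gv3 : ∀ x, f x = 3 → g x = 1 := fun x h => by simp [hg, h]
  have gv4 : ∀ x, f x = 4 → g x = 2 := by
    intro x h
    have : f x ≠ 3 := by rw [h]; decide
    simp [hg, h, this]
  have gv0 : ∀ x, (f x).val < 4 → f x ≠ 3 → g x = 0 := by
    intro x h h3
    have h4 : f x ≠ 4 := by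
      intro hh; rw [hh] at h; exact absurd h (by decide)
    simp [hg, h3, h4, h]
  have gvR : ∀ x, 4 ≤ (f x).val → f x ≠ 4 → g x = 3 := by
    intro x h h4
    have h3 : f x ≠ 3 := by
      intro hh; rw [hh] at h; exact absurd h (by decide)
    simp [hg, h3, h4, show ¬ (f x).val < 4 by omega]
  -- injectivity of g
  have ginj : Function.Injective g := by
    intro x y hgxy
    by_contra hne
    rcases cat x with hx | hx | ⟨hx, hx'⟩ | ⟨hx, hx'⟩ <;>
      rcases cat y with hy | hy | ⟨hy, hy'⟩ | ⟨hy, hy'⟩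
    · exact hne (f.injective (hx.trans hy.symm))
    · rw [gv3 x hx, gv4 y hy] at hgxy; exact absurd hgxy (by decide)
    · rw [gv3 x hx, gv0 y hy hy'] at hgxy; exact absurd hgxy (by decide)
    · rw [gv3 x hx, gvR y hy hy'] at hgxy; exact absurd hgxy (by decide)
    · rw [gv4 x hx, gv3 y hy] at hgxy; exact absurd hgxy (by decide)
    · exact hne (f.injective (hx.trans hy.symm))
    · rw [gv4 x hx, gv0 y hy hy'] at hgxy; exact absurd hgxy (by decide)
    · rw [gv4 x hx, gvR y hy hy'] at hgxy; exact absurd hgxy (by decide)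
    · rw [gv0 x hx hx', gv3 y hy] at hgxy; exact absurd hgxy (by decide)
    · rw [gv0 x hx hx', gv4 y hy] at hgxy; exact absurd hgxy (by decide)
    · -- both in category L0 : triangle with x3
      have hxx3 : x ≠ x3 := fun h => hx' (h ▸ hf3)
      have hyx3 : y ≠ x3 := fun h => hy' (h ▸ hf3)
      exact hL x y x3 hne hyx3 (Ne.symm hxx3) hx hy (by rw [hf3]; decide)
    · rw [gv0 x hx hx', gvR y hy hy'] at hgxy; exact absurd hgxy (by decide)
    · rw [gvR x hx hx', gv3 y hy] at hgxy; exact absurd hgxy (by decide)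
    · rw [gvR x hx hx', gv4 y hy] at hgxy; exact absurd hgxy (by decide)
    · rw [gvR x hx hx', gv0 y hy hy'] at hgxy; exact absurd hgxy (by decide)
    · -- both in category R3 : triangle with x4
      have hxx4 : x ≠ x4 := fun h => hx' (h ▸ hf4)
      have hyx4 : y ≠ x4 := fun h => hy' (h ▸ hf4)
      exact hR x y x4 hne hyx4 (Ne.symm hxx4) hx hy (by rw [hf4]; decide)
  -- the adjacency correspondence
  refine ⟨⟨⟨g, ginj⟩, ?_⟩⟩
  intro x y
  show (pathGraph 4).Adj (g x) (g y) ↔ S.Adj x y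
  by_cases hne : x = y
  · subst hne
    exact iff_of_false (by rw [pathGraph_adj]; omega) (S.irrefl)
  have hfxy : f x ≠ f y := hfne hne
  rw [hadj_iff x y]
  rcases cat x with hx | hx | ⟨hx, hx'⟩ | ⟨hx, hx'⟩ <;>
    rcases cat y with hy | hy | ⟨hy, hy'⟩ | ⟨hy, hy'⟩
  · exact absurd (f.injective (hx.trans hy.symm)) hne
  · -- 3 ~ 4 : true, true
    rw [gv3 x hx, gv4 y hy]
    exact iff_of_true (pathGraph_adj.2 (by decide)) ⟨hfxy, by rw [hx, hy]; decide⟩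
  · -- 3 ~ L0 : true, true
    rw [gv3 x hx, gv0 y hy hy']
    exact iff_of_true (pathGraph_adj.2 (by decide)) ⟨hfxy, Or.inl ⟨by rw [hx]; decide, hy⟩⟩
  · -- 3 ~ R3 : false, false
    rw [gv3 x hx, gvR y hy hy']
    refine iff_of_false (by rw [pathGraph_adj]; omega) ?_
    rintro ⟨-, ⟨h1, h2⟩ | ⟨h1, h2⟩ | ⟨h1, h2⟩ | ⟨h1, h2⟩⟩
    · omega
    · rw [hx] at h1; exact absurd h1 (by decide)
    · exact hy' (Fin.ext h2)
    · rw [hx] at h1; exact absurd h1 (by decide)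
  · rw [gv4 x hx, gv3 y hy]
    exact iff_of_true (pathGraph_adj.2 (by decide)) ⟨hfxy, by rw [hx, hy]; decide⟩
  · exact absurd (f.injective (hx.trans hy.symm)) hne
  · -- 4 ~ L0 : false, false
    rw [gv4 x hx, gv0 y hy hy']
    refine iff_of_false (by rw [pathGraph_adj]; omega) ?_
    rintro ⟨-, ⟨h1, h2⟩ | ⟨h1, h2⟩ | ⟨h1, h2⟩ | ⟨h1, h2⟩⟩
    · rw [hx] at h1; exact absurd h1 (by decide)
    · omega
    · rw [hx] at h1; exact absurd h1 (by decide)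
    · exact hy' (Fin.ext h2)
  · -- 4 ~ R3 : true, true
    rw [gv4 x hx, gvR y hy hy']
    exact iff_of_true (pathGraph_adj.2 (by decide)) ⟨hfxy, Or.inr (Or.inl ⟨by rw [hx]; decide, hy⟩)⟩
  · -- L0 ~ 3 : true, true
    rw [gv0 x hx hx', gv3 y hy]
    exact iff_of_true (pathGraph_adj.2 (by decide)) ⟨hfxy, Or.inl ⟨hx, by rw [hy]; decide⟩⟩
  · -- L0 ~ 4 : false, false
    rw [gv0 x hx hx', gv4 y hy]
    refine iff_of_false (by rw [pathGraph_adj]; omega) ?_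
    rintro ⟨-, ⟨h1, h2⟩ | ⟨h1, h2⟩ | ⟨h1, h2⟩ | ⟨h1, h2⟩⟩
    · rw [hy] at h2; exact absurd h2 (by decide)
    · omega
    · exact hx' (Fin.ext h1)
    · rw [hy] at h2; exact absurd h2 (by decide)
  · -- L0 ~ L0 : impossible
    have hxx3 : x ≠ x3 := fun h => hx' (h ▸ hf3)
    have hyx3 : y ≠ x3 := fun h => hy' (h ▸ hf3)
    exact absurd (hL x y x3 hne hyx3 (Ne.symm hxx3) hx hy (by rw [hf3]; decide)) not_false
  · -- L0 ~ R3 : false, false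
    rw [gv0 x hx hx', gvR y hy hy']
    refine iff_of_false (by rw [pathGraph_adj]; omega) ?_
    rintro ⟨-, ⟨h1, h2⟩ | ⟨h1, h2⟩ | ⟨h1, h2⟩ | ⟨h1, h2⟩⟩
    · omega
    · omega
    · exact hy' (Fin.ext h2)
    · exact hx' (Fin.ext (by omega))
  · -- R3 ~ 3 : false, false
    rw [gvR x hx hx', gv3 y hy]
    refine iff_of_false (by rw [pathGraph_adj]; omega) ?_
    rintro ⟨-, ⟨h1, h2⟩ | ⟨h1, h2⟩ | ⟨h1, h2⟩ | ⟨h1, h2⟩⟩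
    · omega
    · rw [hy] at h2; exact absurd h2 (by decide)
    · rw [hy] at h2; exact absurd h2 (by decide)
    · exact hx' (Fin.ext h1)
  · -- R3 ~ 4 : true, true
    rw [gvR x hx hx', gv4 y hy]
    exact iff_of_true (pathGraph_adj.2 (by decide)) ⟨hfxy, Or.inr (Or.inl ⟨hx, by rw [hy]; decide⟩)⟩
  · -- R3 ~ L0 : false, false
    rw [gvR x hx hx', gv0 y hy hy']
    refine iff_of_false (by rw [pathGraph_adj]; omega) ?_
    rintro ⟨-, ⟨h1, h2⟩ | ⟨h1, h2⟩ | ⟨h1, h2⟩ | ⟨h1, h2⟩⟩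
    · omega
    · omega
    · exact hx' (Fin.ext (by omega))
    · exact hy' (Fin.ext h2)
  · -- R3 ~ R3 : impossible
    have hxx4 : x ≠ x4 := fun h => hx' (h ▸ hf4)
    have hyx4 : y ≠ x4 := fun h => hy' (h ▸ hf4)
    exact absurd (hR x y x4 hne hyx4 (Ne.symm hxx4) hx hy (by rw [hf4]; decide)) not_false

lemma support_getElem? {V : Type*} {G : SimpleGraph V} :
    ∀ {a b : V} (p : G.Walk a b) (k : ℕ), k ≤ p.length →
      p.support[k]? = some (p.getVert k) := by
  intro a b p
  induction p with
  | nil =>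
    intro k hk
    have hk0 : k = 0 := by simpa using hk
    subst hk0
    simp [Walk.getVert]
  | cons h q ih =>
    intro k hk
    cases k with
    | zero => simp [Walk.getVert]
    | succ k =>
      rw [Walk.support_cons]
      simp only [List.getElem?_cons_succ]
      rw [Walk.getVert_cons_succ]
      exact ih k (by simpa [Walk.length_cons] using hk)

lemma cycle_getVert_inj {V : Type*} {G : SimpleGraph V} {v : V} {c : G.Walk v v}
    (hc : c.IsCycle) {i j : ℕ} (hi1 : 1 ≤ i) (hi : i ≤ c.length) (hj1 : 1 ≤ j)
    (hj : j ≤ c.length) (heq : c.getVert i = c.getVert j) : i = j := by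
  have hnd : c.support.tail.Nodup := ((Walk.isCycle_def _).1 hc).2.2
  have hlen : c.support.tail.length = c.length := by
    rw [List.length_tail, Walk.length_support]
    omega
  have key : ∀ k, 1 ≤ k → k ≤ c.length → c.support.tail[k-1]? = some (c.getVert k) := by
    intro k h1 h2
    have := support_getElem? c k h2
    rw [Walk.support_eq_cons] at this
    obtain ⟨k', rfl⟩ := Nat.exists_eq_add_of_le h1
    rw [Nat.add_comm 1 k'] at this ⊢
    rw [List.getElem?_cons_succ] at this
    simpa using this
  have h2 : c.support.tail[i-1]? = c.support.tail[j-1]? := by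
    rw [key i hi1 hi, key j hj1 hj, heq]
  have := (List.getElem?_inj (l := c.support.tail) (i := i-1) (j := j-1) (by omega) hnd).1 h2
  omega

lemma edge_getVert_mem {V : Type*} {G : SimpleGraph V} :
    ∀ {a b : V} (p : G.Walk a b) (k : ℕ), k < p.length →
      s(p.getVert k, p.getVert (k+1)) ∈ p.edges := by
  intro a b p
  induction p with
  | nil => intro k hk; simp at hk
  | cons h q ih =>
    intro k hk
    cases k with
    | zero =>
      rw [Walk.edges_cons]
      rw [show (Walk.cons h q).getVert 0 = _ from Walk.getVert_zero _,
        Walk.getVert_cons_succ, Walk.getVert_zero]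
      exact List.mem_cons_self
    | succ k =>
      rw [Walk.edges_cons, Walk.getVert_cons_succ, Walk.getVert_cons_succ]
      exact List.mem_cons_of_mem _ (ih k (by simpa [Walk.length_cons] using hk))


section Dumbbell
variable (m : ℕ)

/-- Two `m`-cycles joined by a bridge at `0`. -/
def dumbbell : SimpleGraph (ZMod m ⊕ ZMod m) where
  Adj v w := match v, w with
    | .inl i, .inl j => i ≠ j ∧ (j = i + 1 ∨ i = j + 1)
    | .inr i, .inr j => i ≠ j ∧ (j = i + 1 ∨ i = j + 1)
    | .inl i, .inr j => i = 0 ∧ j = 0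
    | .inr i, .inl j => i = 0 ∧ j = 0
  symm := ⟨by
    rintro (i | i) (j | j) h
    · exact ⟨h.1.symm, h.2.symm⟩
    · exact ⟨h.2, h.1⟩
    · exact ⟨h.2, h.1⟩
    · exact ⟨h.1.symm, h.2.symm⟩⟩
  loopless := ⟨by
    rintro (i | i) h <;> exact h.1 rfl⟩

variable {m}

/-- The swap homomorphism of the dumbbell. -/
def dumbbellSwap : dumbbell m →g dumbbell m where
  toFun := Sum.swap
  map_rel' := by
    intro v w h
    cases v <;> cases w <;> exact h

variable (hm : 3 ≤ m)
include hm

lemma zmod_one_ne_zero : (1 : ZMod m) ≠ 0 := by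
  have : ((1 : ℕ) : ZMod m) ≠ 0 := by
    rw [Ne, ZMod.natCast_eq_zero_iff]
    intro h
    have := Nat.le_of_dvd one_pos h
    omega
  simpa using this

lemma zmod_two_ne_zero : (2 : ZMod m) ≠ 0 := by
  have : ((2 : ℕ) : ZMod m) ≠ 0 := by
    rw [Ne, ZMod.natCast_eq_zero_iff]
    intro h
    have := Nat.le_of_dvd two_pos h
    omega
  simpa using this

lemma dumbbell_adj_succ (i : ZMod m) : (dumbbell m).Adj (.inl i) (.inl (i + 1)) := by
  refine ⟨fun h => zmod_one_ne_zero hm ?_, Or.inl rfl⟩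
  have := h.symm
  rwa [add_eq_left] at this

lemma dumbbell_adj_succ_r (i : ZMod m) : (dumbbell m).Adj (.inr i) (.inr (i + 1)) := by
  refine ⟨fun h => zmod_one_ne_zero hm ?_, Or.inl rfl⟩
  have := h.symm
  rwa [add_eq_left] at this

lemma dumbbell_adj_pred (i : ZMod m) : (dumbbell m).Adj (.inl i) (.inl (i - 1)) := by
  refine ⟨fun h => zmod_one_ne_zero hm ?_, Or.inr (by ring)⟩
  calc (1 : ZMod m) = i - (i - 1) := by ring
    _ = 0 := by rw [← h]; ring

lemma dumbbell_adj_pred_r (i : ZMod m) : (dumbbell m).Adj (.inr i) (.inr (i - 1)) := by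
  refine ⟨fun h => zmod_one_ne_zero hm ?_, Or.inr (by ring)⟩
  calc (1 : ZMod m) = i - (i - 1) := by ring
    _ = 0 := by rw [← h]; ring

lemma dumbbell_connected : (dumbbell m).Connected := by
  have hNZ : NeZero m := ⟨by omega⟩
  rw [connected_iff]
  refine ⟨fun v w => ?_, ⟨.inl 0⟩⟩
  have keyL : ∀ k : ℕ, (dumbbell m).Reachable (.inl 0) (.inl (k : ZMod m)) := by
    intro k
    induction k with
    | zero => rw [Nat.cast_zero]
    | succ k ih =>
      push_cast
      exact ih.trans (dumbbell_adj_succ hm _).reachable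
  have keyR : ∀ k : ℕ, (dumbbell m).Reachable (.inr 0) (.inr (k : ZMod m)) := by
    intro k
    induction k with
    | zero => rw [Nat.cast_zero]
    | succ k ih =>
      push_cast
      exact ih.trans (dumbbell_adj_succ_r hm _).reachable
  have bridge : (dumbbell m).Reachable (.inl 0) (.inr 0) :=
    (show (dumbbell m).Adj (.inl 0) (.inr 0) from ⟨rfl, rfl⟩).reachable
  have key : ∀ v, (dumbbell m).Reachable (.inl 0) v := by
    rintro (i | i)
    · have hk := ZMod.natCast_zmod_val i
      exact hk ▸ keyL i.val
    · have hk := ZMod.natCast_zmod_val i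
      exact hk ▸ bridge.trans (keyR i.val)
  exact (key v).symm.trans (key w)

lemma dumbbell_minDeg [NeZero m] : 2 ≤ minDeg (dumbbell m) := by
  refine le_csInf ⟨_, ⟨.inl 0, rfl⟩⟩ ?_
  rintro d ⟨v, rfl⟩
  have hne : ∀ i : ZMod m, i + 1 ≠ i - 1 := by
    intro i h
    apply zmod_two_ne_zero hm
    calc (2 : ZMod m) = (i + 1) - (i - 1) := by ring
      _ = 0 := by rw [h]; ring
  cases v with
  | inl i =>
    have hsub : {Sum.inl (i+1), Sum.inl (i-1)} ⊆ (dumbbell m).neighborSet (.inl i) := by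
      intro x hx
      rcases hx with rfl | rfl
      · exact dumbbell_adj_succ hm i
      · exact dumbbell_adj_pred hm i
    calc 2 = ({Sum.inl (i+1), Sum.inl (i-1)} : Set (ZMod m ⊕ ZMod m)).ncard := by
          rw [Set.ncard_pair (by simpa using hne i)]
      _ ≤ _ := Set.ncard_le_ncard hsub (Set.toFinite _)
  | inr i =>
    have hsub : {Sum.inr (i+1), Sum.inr (i-1)} ⊆ (dumbbell m).neighborSet (.inr i) := by
      intro x hx
      rcases hx with rfl | rfl
      · exact dumbbell_adj_succ_r hm i
      · exact dumbbell_adj_pred_r hm i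
    calc 2 = ({Sum.inr (i+1), Sum.inr (i-1)} : Set (ZMod m ⊕ ZMod m)).ncard := by
          rw [Set.ncard_pair (by simpa using hne i)]
      _ ≤ _ := Set.ncard_le_ncard hsub (Set.toFinite _)

lemma dumbbell_edgeConn [NeZero m] : edgeConn (dumbbell m) ≤ 1 := by
  apply Nat.sInf_le
  refine ⟨{s(Sum.inl 0, Sum.inr 0)}, ?_, by simp, ?_⟩
  · intro e he
    simp only [coe_singleton, Set.mem_singleton_iff] at he
    subst he
    exact (SimpleGraph.mem_edgeSet (dumbbell m)).2 ⟨rfl, rfl⟩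
  · intro h
    obtain ⟨p⟩ := h.preconnected (.inl 0) (.inr 0)
    have hcl : ∀ x y : ZMod m ⊕ ZMod m, x.isLeft →
        ((dumbbell m).deleteEdges ↑({s(Sum.inl (0 : ZMod m), Sum.inr (0 : ZMod m))} :
          Finset (Sym2 (ZMod m ⊕ ZMod m)))).Adj x y → y.isLeft := by
      rintro (x | x) (y | y) hx hadj
      · rfl
      · rw [deleteEdges_adj] at hadj
        obtain ⟨⟨h1, h2⟩, hmem⟩ := hadj
        subst h1; subst h2
        exact absurd (by simp) hmem
      · exact absurd hx (by simp)
      · exact absurd hx (by simp)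
    have := walk_closed_prop (fun x y hx ha => hcl x y hx ha) p rfl
    simp at this

lemma dumbbell_bridge : (dumbbell m).IsBridge s(Sum.inl (0 : ZMod m), Sum.inr (0 : ZMod m)) := by
  rw [isBridge_iff]
  intro h
  obtain ⟨p⟩ := h
  have hcl : ∀ x y : ZMod m ⊕ ZMod m, x.isLeft →
      ((dumbbell m) \ fromEdgeSet {s(Sum.inl (0 : ZMod m), Sum.inr (0 : ZMod m))}).Adj x y →
      y.isLeft := by
    rintro (x | x) (y | y) hx hadj
    · rfl
    · rw [sdiff_adj] at hadj
      obtain ⟨⟨h1, h2⟩, hmem⟩ := hadj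
      subst h1; subst h2
      exact absurd ((fromEdgeSet_adj _).2 ⟨by simp, by simp⟩) hmem
    · exact absurd hx (by simp)
    · exact absurd hx (by simp)
  have := walk_closed_prop (fun x y hx ha => hcl x y hx ha) p rfl
  simp at this

/-- No cycle in the dumbbell has length less than `m` (cycles starting on the left). -/
lemma dumbbell_no_short_cycle_left [NeZero m] {t : ZMod m}
    (c : (dumbbell m).Walk (.inl t) (.inl t)) (hc : c.IsCycle) (hlen : c.length < m) :
    False := by
  have hbr : s(Sum.inl (0 : ZMod m), Sum.inr (0 : ZMod m)) ∉ c.edges :=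
    (isBridge_iff_forall_cycle_notMem ((mem_edgeSet (dumbbell m) (v := Sum.inl (0 : ZMod m)) (w := Sum.inr (0 : ZMod m))).2 ⟨rfl, rfl⟩)).1 (dumbbell_bridge hm) c hc
  have h3 : 3 ≤ c.length := hc.three_le_length
  -- every vertex of the cycle is on the left side
  have hside : ∀ k : ℕ, ∃ s : ZMod m, c.getVert k = Sum.inl s := by
    intro k
    induction k with
    | zero => exact ⟨t, c.getVert_zero⟩
    | succ k ih =>
      obtain ⟨s, hs⟩ := ih
      by_cases hk : k < c.length
      · rcases h : c.getVert (k+1) with s' | s'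
        · exact ⟨s', rfl⟩
        · exfalso
          have hadj := c.adj_getVert_succ hk
          rw [hs, h] at hadj
          obtain ⟨h1, h2⟩ := hadj
          subst h1; subst h2
          have := edge_getVert_mem c k hk
          rw [hs, h] at this
          exact hbr this
      · exact ⟨t, by rw [c.getVert_of_length_le (by omega)]⟩
  choose tf htf using hside
  have htf0 : tf 0 = t := by
    have := htf 0
    rw [c.getVert_zero] at this
    exact (Sum.inl.injEq _ _ ▸ this.symm)
  have htfl : tf c.length = t := by
    have := htf c.length
    rw [c.getVert_length] at this
    exact (Sum.inl.injEq _ _ ▸ this.symm)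
  have hstep : ∀ k, k < c.length → tf (k+1) = tf k + 1 ∨ tf k = tf (k+1) + 1 := by
    intro k hk
    have hadj := c.adj_getVert_succ hk
    rw [htf k, htf (k+1)] at hadj
    exact hadj.2
  have inj : ∀ i j, 1 ≤ i → i ≤ c.length → 1 ≤ j → j ≤ c.length → tf i = tf j → i = j := by
    intro i j h1 h2 h3' h4 heq
    exact cycle_getVert_inj hc h1 h2 h3' h4 (by rw [htf i, htf j, heq])
  have hnb : ∀ k, k + 1 < c.length → tf (k+2) ≠ tf k := by
    intro k hk heq
    rcases Nat.eq_zero_or_pos k with rfl | hpos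
    · have : (2 : ℕ) = c.length := by
        apply inj 2 c.length (by omega) (by omega) (by omega) (le_refl _)
        rw [heq, htf0, htfl]
      omega
    · have := inj (k+2) k (by omega) (by omega) (by omega) (by omega) heq
      omega
  rcases hstep 0 (by omega) with hdir | hdir
  · -- forward
    have hall : ∀ k, k < c.length → tf (k+1) = tf k + 1 := by
      intro k
      induction k with
      | zero => exact fun _ => hdir
      | succ k ih =>
        intro hk
        have hk' : k < c.length := by omega
        have h1 := ih hk'
        rcases hstep (k+1) hk with h | h
        · exact h
        · exfalso
          apply hnb k hk
          linear_combination h1 - h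
    have hval : ∀ k, k ≤ c.length → tf k = tf 0 + (k : ZMod m) := by
      intro k
      induction k with
      | zero => intro _; simp
      | succ k ih =>
        intro hk
        rw [hall k (by omega), ih (by omega)]
        push_cast
        ring
    have : ((c.length : ℕ) : ZMod m) = 0 := by
      have := hval c.length (le_refl _)
      rw [htfl, htf0] at this
      linear_combination -this
    rw [ZMod.natCast_eq_zero_iff] at this
    have := Nat.le_of_dvd (by omega) this
    omega
  · -- backward
    have hall : ∀ k, k < c.length → tf (k+1) = tf k - 1 := by
      intro k
      induction k with
      | zero => exact fun _ => by linear_combination -hdir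
      | succ k ih =>
        intro hk
        have hk' : k < c.length := by omega
        have h1 := ih hk'
        rcases hstep (k+1) hk with h | h
        · exfalso
          apply hnb k hk
          linear_combination h + h1
        · linear_combination -h
    have hval : ∀ k, k ≤ c.length → tf k = tf 0 - (k : ZMod m) := by
      intro k
      induction k with
      | zero => intro _; simp
      | succ k ih =>
        intro hk
        rw [hall k (by omega), ih (by omega)]
        push_cast
        ring
    have : ((c.length : ℕ) : ZMod m) = 0 := by
      have := hval c.length (le_refl _)
      rw [htfl, htf0] at this
      linear_combination this
    rw [ZMod.natCast_eq_zero_iff] at this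
    have := Nat.le_of_dvd (by omega) this
    omega

lemma dumbbell_no_short_cycle [NeZero m] {v : ZMod m ⊕ ZMod m}
    (c : (dumbbell m).Walk v v) (hc : c.IsCycle) (hlen : c.length < m) : False := by
  cases hv : v with
  | inl t =>
    subst hv
    exact dumbbell_no_short_cycle_left hm c hc hlen
  | inr t =>
    subst hv
    have hinj : Function.Injective (dumbbellSwap (m := m)) := by
      have : Function.Injective (Sum.swap : ZMod m ⊕ ZMod m → ZMod m ⊕ ZMod m) :=
        Function.LeftInverse.injective Sum.swap_leftInverse
      exact this
    refine dumbbell_no_short_cycle_left hm (t := t) (c.map dumbbellSwap) (hc.map hinj) ?_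
    exact lt_of_eq_of_lt (Walk.length_map _ _) hlen

end Dumbbell

end ForbiddenChar

/-- Characterization of single forbidden subgraphs forcing `κ' = δ`: a connected graph `S`
has the property that every connected `S`-free graph (on ≥ 2 vertices) satisfies
`κ'(G) = δ(G)` if and only if `S` is an induced subgraph of `P₄`. -/
theorem single_forbidden_characterization {W : Type} [Fintype W]
    (S : SimpleGraph W) (hS : S.Connected) :
    ((∀ (V : Type) [Fintype V] (G : SimpleGraph V), G.Connected → 2 ≤ Fintype.card V →
        IsEmpty (S ↪g G) → edgeConn G = minDeg G) →
      Nonempty (S ↪g pathGraph 4)) ∧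
    (Nonempty (S ↪g pathGraph 4) →
      ∀ (V : Type) [Fintype V] (G : SimpleGraph V), G.Connected → 2 ≤ Fintype.card V →
        IsEmpty (S ↪g G) → edgeConn G = minDeg G) := by
  constructor
  · -- necessity
    intro H
    by_contra hP4
    by_cases hB : Nonempty (S ↪g ForbiddenChar.bridgeGraph)
    · obtain ⟨f⟩ := hB
      by_cases hac : S.IsAcyclic
      · exact hP4 (ForbiddenChar.acyclic_embed hS hac f)
      · -- S has a cycle : use a dumbbell with long girth
        set m := Fintype.card W + 3 with hmdef
        haveI : NeZero m := ⟨by omega⟩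
        have hm : 3 ≤ m := by omega
        unfold SimpleGraph.IsAcyclic at hac
        push_neg at hac
        obtain ⟨v, c, hc⟩ := hac
        have hlen : c.length ≤ Fintype.card W := by
          have h1 : c.support.tail.length = c.length := by
            rw [List.length_tail, SimpleGraph.Walk.length_support]
            omega
          have h2 := ((SimpleGraph.Walk.isCycle_def _).1 hc).2.2.length_le_card
          omega
        have hfree : IsEmpty (S ↪g ForbiddenChar.dumbbell m) := by
          constructor
          intro g
          refine ForbiddenChar.dumbbell_no_short_cycle hm (c.map g.toHom)
            (hc.map g.injective) ?_
          rw [SimpleGraph.Walk.length_map]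
          omega
        have hcard : 2 ≤ Fintype.card (ZMod m ⊕ ZMod m) := by
          rw [Fintype.card_sum, ZMod.card]
          omega
        have heq := H _ (ForbiddenChar.dumbbell m) (ForbiddenChar.dumbbell_connected hm) hcard hfree
        have h1 := ForbiddenChar.dumbbell_edgeConn (m := m) hm
        have h2 := ForbiddenChar.dumbbell_minDeg (m := m) hm
        omega
    · rw [not_nonempty_iff] at hB
      have heq := H _ ForbiddenChar.bridgeGraph ForbiddenChar.bridgeGraph_connected (by norm_num) hB
      have h1 := ForbiddenChar.bridgeGraph_edgeConn
      have h2 := ForbiddenChar.bridgeGraph_minDeg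
      omega
  · -- sufficiency
    rintro ⟨e⟩ V _ G hconn hcard hfree
    have hP4 : ∀ {a b c d : V}, G.Adj a b → G.Adj b c → G.Adj c d →
        ¬ G.Adj a c → ¬ G.Adj a d → ¬ G.Adj b d → a ≠ c → a ≠ d → b ≠ d → False := by
      intro a b c d hab hbc hcd hac had hbd hacne hadne hbdne
      obtain ⟨f⟩ := ForbiddenChar.p4_embed hab hbc hcd hac had hbd hacne hadne hbdne
      exact hfree.elim' (f.comp e)
    exact le_antisymm (ForbiddenChar.edgeConn_le_minDeg hconn hcard)
      (ForbiddenChar.minDeg_le_edgeConn hconn hcard hP4)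
end

section
/- Every connected graph in which every induced path has at most 3 vertices (P₄-free) and which has at least 2 vertices satisfies: for any nonempty proper vertex subset A, the number of edges between A and its complement is at least δ(G). -/
open SimpleGraph

private lemma walk_cross {V : Type*} {G : SimpleGraph V} (A : Set V) :
    ∀ {a b : V}, G.Walk a b → a ∈ A → b ∉ A → ∃ x ∈ A, ∃ y, y ∉ A ∧ G.Adj x y := by
  intro a b p
  induction p with
  | nil => intro ha hb; exact absurd ha hb
  | @cons a c b h p ih =>
    intro ha hb
    by_cases hc : c ∈ A
    · exact ih hc hb
    · exact ⟨a, ha, c, hc, h⟩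

/-- If every neighbor of `v ∈ A` lying in `A` has a neighbor outside `A`, then the cut has
at least `deg v` edges. -/
private lemma cut_lemma {V : Type*} [Fintype V] (G : SimpleGraph V) (A : Set V)
    {v : V} (hv : v ∈ A)
    (h : ∀ u, G.Adj v u → u ∈ A → ∃ b, b ∉ A ∧ G.Adj u b) :
    (G.neighborSet v).ncard ≤
      ({e ∈ G.edgeSet | ∃ x ∈ A, ∃ y ∉ A, e = s(x, y)} : Set (Sym2 V)).ncard := by
  classical
  set f : V → Sym2 V := fun u =>
    if hu : u ∈ A ∧ ∃ b, b ∉ A ∧ G.Adj u b then s(u, hu.2.choose) else s(v, u) with hf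
  apply Set.ncard_le_ncard_of_injOn f ?_ ?_ (Set.toFinite _)
  · intro u hu
    have hadj : G.Adj v u := hu
    by_cases hc : u ∈ A ∧ ∃ b, b ∉ A ∧ G.Adj u b
    · have hspec := hc.2.choose_spec
      simp only [hf]
      rw [dif_pos hc]
      exact ⟨G.mem_edgeSet.mpr hspec.2, u, hc.1, hc.2.choose, hspec.1, rfl⟩
    · have huA : u ∉ A := fun huA => hc ⟨huA, h u hadj huA⟩
      simp only [hf]
      rw [dif_neg hc]
      exact ⟨G.mem_edgeSet.mpr hadj, v, hv, u, huA, rfl⟩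
  · intro u hu u' hu' heq
    have hadj : G.Adj v u := hu
    have hadj' : G.Adj v u' := hu'
    simp only [hf] at heq
    by_cases hc : u ∈ A ∧ ∃ b, b ∉ A ∧ G.Adj u b <;>
      by_cases hc' : u' ∈ A ∧ ∃ b, b ∉ A ∧ G.Adj u' b
    · have hspec := hc.2.choose_spec
      have hspec' := hc'.2.choose_spec
      rw [dif_pos hc, dif_pos hc', Sym2.eq_iff] at heq
      rcases heq with ⟨h1, _⟩ | ⟨h1, _⟩
      · exact h1
      · exact absurd hc.1 (by rw [h1]; exact hspec'.1)
    · have hspec := hc.2.choose_spec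
      have hu'A : u' ∉ A := fun hx => hc' ⟨hx, h u' hadj' hx⟩
      rw [dif_pos hc, dif_neg hc', Sym2.eq_iff] at heq
      rcases heq with ⟨h1, _⟩ | ⟨h1, _⟩
      · exact absurd (h1 ▸ hadj) G.irrefl
      · exact absurd hc.1 (by rw [h1]; exact hu'A)
    · have hspec' := hc'.2.choose_spec
      have huA : u ∉ A := fun hx => hc ⟨hx, h u hadj hx⟩
      rw [dif_neg hc, dif_pos hc', Sym2.eq_iff] at heq
      rcases heq with ⟨h1, _⟩ | ⟨_, h2⟩
      · exact absurd (h1 ▸ hadj') G.irrefl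
      · exact absurd hc'.1 (by rw [← h2]; exact huA)
    · rw [dif_neg hc, dif_neg hc', Sym2.eq_iff] at heq
      rcases heq with ⟨_, h2⟩ | ⟨_, h2⟩
      · exact h2
      · exact absurd (h2 ▸ hadj) G.irrefl

/-- Mirror version: `v ∉ A` and every neighbor of `v` outside `A` has a neighbor in `A`. -/
private lemma cut_lemma' {V : Type*} [Fintype V] (G : SimpleGraph V) (A : Set V)
    {v : V} (hv : v ∉ A)
    (h : ∀ u, G.Adj v u → u ∉ A → ∃ b, b ∈ A ∧ G.Adj u b) :
    (G.neighborSet v).ncard ≤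
      ({e ∈ G.edgeSet | ∃ x ∈ A, ∃ y ∉ A, e = s(x, y)} : Set (Sym2 V)).ncard := by
  classical
  set f : V → Sym2 V := fun u =>
    if hu : u ∉ A ∧ ∃ b, b ∈ A ∧ G.Adj u b then s(hu.2.choose, u) else s(u, v) with hf
  apply Set.ncard_le_ncard_of_injOn f ?_ ?_ (Set.toFinite _)
  · intro u hu
    have hadj : G.Adj v u := hu
    by_cases hc : u ∉ A ∧ ∃ b, b ∈ A ∧ G.Adj u b
    · have hspec := hc.2.choose_spec
      simp only [hf]
      rw [dif_pos hc]
      exact ⟨G.mem_edgeSet.mpr hspec.2.symm, hc.2.choose, hspec.1, u, hc.1, rfl⟩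
    · have huA : u ∈ A := by
        by_contra huA
        exact hc ⟨huA, h u hadj huA⟩
      simp only [hf]
      rw [dif_neg hc]
      exact ⟨G.mem_edgeSet.mpr hadj.symm, u, huA, v, hv, rfl⟩
  · intro u hu u' hu' heq
    have hadj : G.Adj v u := hu
    have hadj' : G.Adj v u' := hu'
    simp only [hf] at heq
    by_cases hc : u ∉ A ∧ ∃ b, b ∈ A ∧ G.Adj u b <;>
      by_cases hc' : u' ∉ A ∧ ∃ b, b ∈ A ∧ G.Adj u' b
    · have hspec := hc.2.choose_spec
      have hspec' := hc'.2.choose_spec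
      rw [dif_pos hc, dif_pos hc', Sym2.eq_iff] at heq
      rcases heq with ⟨_, h2⟩ | ⟨_, h2⟩
      · exact h2
      · exact absurd hspec'.1 (by rw [← h2]; exact hc.1)
    · have hspec := hc.2.choose_spec
      have hu'A : u' ∈ A := by
        by_contra hx
        exact hc' ⟨hx, h u' hadj' hx⟩
      rw [dif_pos hc, dif_neg hc', Sym2.eq_iff] at heq
      rcases heq with ⟨_, h2⟩ | ⟨_, h2⟩
      · exact absurd (h2 ▸ hadj) G.irrefl
      · exact absurd hu'A (by rw [← h2]; exact hc.1)
    · have hspec' := hc'.2.choose_spec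
      have huA : u ∈ A := by
        by_contra hx
        exact hc ⟨hx, h u hadj hx⟩
      rw [dif_neg hc, dif_pos hc', Sym2.eq_iff] at heq
      rcases heq with ⟨_, h2⟩ | ⟨h1, _⟩
      · exact absurd (h2 ▸ hadj') G.irrefl
      · exact absurd huA (by rw [h1]; exact hc'.1)
    · rw [dif_neg hc, dif_neg hc', Sym2.eq_iff] at heq
      rcases heq with ⟨h1, _⟩ | ⟨h1, _⟩
      · exact h1
      · exact absurd (h1 ▸ hadj) G.irrefl

/-- In a connected `P₄`-free graph on at least 2 vertices, every edge cut associated with a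
nonempty proper vertex subset `A` has at least `δ(G)` edges. -/
theorem p4_free_edge_cut_ge_minDeg {V : Type*} [Fintype V] (G : SimpleGraph V)
    (hG : G.Connected) (hcard : 2 ≤ Fintype.card V)
    (hfree : IsEmpty (pathGraph 4 ↪g G))
    (A : Set V) (hA : A.Nonempty) (hAne : A ≠ Set.univ) :
    minDeg G ≤ ({e ∈ G.edgeSet | ∃ x ∈ A, ∃ y ∉ A, e = s(x, y)} : Set (Sym2 V)).ncard := by
  classical
  obtain ⟨a, ha⟩ := hA
  obtain ⟨b, hb⟩ : ∃ b, b ∉ A := by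
    by_contra h
    push_neg at h
    exact hAne (Set.eq_univ_of_forall h)
  obtain ⟨x, hxA, y, hyA, hxy⟩ := walk_cross A (hG.preconnected a b).some ha hb
  by_cases hx : ∀ u, G.Adj x u → u ∈ A → ∃ c, c ∉ A ∧ G.Adj u c
  · exact le_trans (Nat.sInf_le ⟨x, rfl⟩) (cut_lemma G A hxA hx)
  by_cases hy : ∀ u, G.Adj y u → u ∉ A → ∃ c, c ∈ A ∧ G.Adj u c
  · exact le_trans (Nat.sInf_le ⟨y, rfl⟩) (cut_lemma' G A hyA hy)
  exfalso
  push_neg at hx hy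
  obtain ⟨x', hxx', hx'A, hx'⟩ := hx
  obtain ⟨y', hyy', hy'A, hy'⟩ := hy
  -- x' - x - y - y' is an induced P4
  have nxy' : ¬ G.Adj x y' := fun h => hy' x hxA h.symm
  have ny'x : ¬ G.Adj y' x := fun h => hy' x hxA h
  have nx'y : ¬ G.Adj x' y := fun h => hx' y hyA h
  have nyx' : ¬ G.Adj y x' := fun h => hx' y hyA h.symm
  have nx'y' : ¬ G.Adj x' y' := fun h => hx' y' hy'A h
  have ny'x' : ¬ G.Adj y' x' := fun h => hx' y' hy'A h.symm
  have a1 : G.Adj x' x := hxx'.symm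
  have a1' : G.Adj x x' := hxx'
  have a2 : G.Adj x y := hxy
  have a2' : G.Adj y x := hxy.symm
  have a3 : G.Adj y y' := hyy'
  have a3' : G.Adj y' y := hyy'.symm
  have d1 : x' ≠ x := hxx'.ne'
  have d2 : x' ≠ y := fun h => hyA (h ▸ hx'A)
  have d3 : x' ≠ y' := fun h => hy'A (h ▸ hx'A)
  have d4 : x ≠ y := hxy.ne
  have d5 : x ≠ y' := fun h => hy'A (h ▸ hxA)
  have d6 : y ≠ y' := hyy'.ne
  refine hfree.elim ⟨⟨![x', x, y, y'], ?_⟩, ?_⟩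
  · intro i j hij
    fin_cases i <;> fin_cases j <;> simp_all
  · intro i j
    show G.Adj (![x', x, y, y'] i) (![x', x, y, y'] j) ↔ _
    fin_cases i <;> fin_cases j <;>
      simp_all [pathGraph_adj] <;> omega
end
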